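/- arXiv:2408.09359 — 3 statements merged into one kernel-verified Lean document; each statement's English description precedes it below -/
import Mathlib

section
/- Let G be a finitely generated abelian group and g ∈ G a torsion element, and let p be a prime. Writing the p-primary parts with exponent multisets I(G(p)) and I((G/ℤg)(p)), the symmetric-difference exponents interleave: if I((G/ℤg)(p)) \ (I((G/ℤg)(p)) ∩ I(G(p))) = {a_1 > a_2 > ...} and I(G(p)) \ (I((G/ℤg)(p)) ∩ I(G(p))) = {b_1 > b_2 > ...}, then b_1 > a_1 > b_2 > a_2 > ... . -/
/-- `S` is the multiset of exponents of the finite abelian `p`-group `A`, i.e.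
`A ≅ ⊕_{m ∈ S} ℤ/p^mℤ` with all exponents `≥ 1`. -/
def IsExpMultiset (p : ℕ) (A : Type*) [AddCommGroup A] (S : Multiset ℕ) : Prop :=
  (∀ m ∈ S, 1 ≤ m) ∧
    ∃ l : List ℕ, (l : Multiset ℕ) = S ∧
      Nonempty (A ≃+ ((i : Fin l.length) → ZMod (p ^ l.get i)))

/-- The elements of a multiset of naturals listed in (weakly) decreasing order. -/
def sortDesc (s : Multiset ℕ) : List ℕ := (s.sort (· ≤ ·)).reverse

/-- The interleaving condition `(**)`: for (decreasingly sorted) lists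
`bs = [b₁, b₂, …]` and `as = [a₁, a₂, …]`, one has `b₁ > a₁ > b₂ > a₂ > ⋯`. -/
def Interleave (bs as : List ℕ) : Prop :=
  as.length ≤ bs.length ∧ bs.length ≤ as.length + 1 ∧
    (∀ i < as.length, as.getD i 0 < bs.getD i 0) ∧
    (∀ i, i + 1 < bs.length → bs.getD (i + 1) 0 < as.getD i 0)

namespace IP

def cnt (k : ℕ) (S : Multiset ℕ) : ℕ := Multiset.countP (fun m => k ≤ m) S

lemma coe_sortDesc (S : Multiset ℕ) : (↑(sortDesc S) : Multiset ℕ) = S := by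
  rw [sortDesc, Multiset.coe_reverse, Multiset.sort_eq]

lemma length_sortDesc (S : Multiset ℕ) : (sortDesc S).length = Multiset.card S := by
  rw [sortDesc, List.length_reverse, Multiset.length_sort]

lemma sorted_sortDesc (S : Multiset ℕ) : (sortDesc S).Pairwise (fun a b => b ≤ a) := by
  rw [sortDesc, List.pairwise_reverse]
  exact Multiset.pairwise_sort S _

lemma countP_sortDesc (S : Multiset ℕ) (k : ℕ) :
    (sortDesc S).countP (fun m => decide (k ≤ m)) = cnt k S := by
  have h : (↑(sortDesc S) : Multiset ℕ).countP (fun m => k ≤ m) = cnt k S := by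
    rw [coe_sortDesc]; rfl
  rw [← h, Multiset.coe_countP]

lemma mem_of_getD {l : List ℕ} {i : ℕ} (h : i < l.length) : l.getD i 0 ∈ l := by
  rw [List.getD_eq_getElem l 0 h]
  exact List.getElem_mem h

lemma sorted_getD_lt_iff {l : List ℕ} (hl : l.Pairwise (fun a b => b ≤ a)) {k : ℕ} (hk : 1 ≤ k) :
    ∀ i, (l.getD i 0 < k ↔ l.countP (fun m => decide (k ≤ m)) ≤ i) := by
  induction l with
  | nil => intro i; simp; omega
  | cons x t ih =>
    have hxt : ∀ b ∈ t, b ≤ x := (List.pairwise_cons.mp hl).1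
    have hst : t.Pairwise (fun a b => b ≤ a) := (List.pairwise_cons.mp hl).2
    have hct : ¬ (k ≤ x) → t.countP (fun m => decide (k ≤ m)) = 0 := by
      intro hx
      rw [List.countP_eq_zero]
      intro a ha
      simpa using Nat.lt_of_le_of_lt (hxt a ha) (Nat.not_le.mp hx)
    intro i
    cases i with
    | zero =>
      rw [List.getD_cons_zero, List.countP_cons, Nat.le_zero]
      by_cases hx : k ≤ x
      · simp [hx]
      · have := hct hx
        simp [hx, this]
        omega
    | succ i =>
      rw [List.getD_cons_succ, List.countP_cons, ih hst i]
      by_cases hx : k ≤ x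
      · simp [hx]
      · have h2 : t.getD i 0 < k := by
          rcases Nat.lt_or_ge i t.length with h | h
          · exact Nat.lt_of_le_of_lt (hxt _ (mem_of_getD h)) (Nat.not_le.mp hx)
          · rw [List.getD_eq_default _ _ h]; omega
        have h3 := (ih hst i).mp h2
        have := hct hx
        simp [hx, this]

lemma cnt_comm_sub (k : ℕ) (N M : Multiset ℕ) :
    cnt k N + cnt k (M - N) = cnt k M + cnt k (N - M) := by
  have h : N + (M - N) = M + (N - M) := by
    have h1 : N ∪ M = M - N + N := by rw [Multiset.union_comm]; exact Multiset.union_def M N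
    have h2 : N ∪ M = N - M + M := Multiset.union_def N M
    rw [h2] at h1
    calc N + (M - N) = M - N + N := add_comm _ _
    _ = N - M + M := h1.symm
    _ = M + (N - M) := add_comm _ _
  have := congrArg (Multiset.countP (fun m => k ≤ m)) h
  rwa [Multiset.countP_add, Multiset.countP_add] at this

lemma interleave_of_counts {N M : Multiset ℕ}
    (hN1 : ∀ m ∈ N, 1 ≤ m) (hM1 : ∀ m ∈ M, 1 ≤ m)
    (hdisj : ∀ v, v ∈ N → v ∉ M)
    (hle : ∀ k, 1 ≤ k → cnt k M ≤ cnt k N)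
    (hle' : ∀ k, 1 ≤ k → cnt k N ≤ cnt k M + 1) :
    Interleave (sortDesc N) (sortDesc M) := by
  have hcN : cnt 1 N = Multiset.card N := Multiset.countP_eq_card.mpr (by exact hN1)
  have hcM : cnt 1 M = Multiset.card M := Multiset.countP_eq_card.mpr (by exact hM1)
  have hlenN : (sortDesc N).length = Multiset.card N := length_sortDesc N
  have hlenM : (sortDesc M).length = Multiset.card M := length_sortDesc M
  have hmemN : ∀ {i}, i < (sortDesc N).length → (sortDesc N).getD i 0 ∈ N := by
    intro i hi
    have h2 : (sortDesc N).getD i 0 ∈ (↑(sortDesc N) : Multiset ℕ) := mem_of_getD hi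
    rwa [coe_sortDesc] at h2
  have hmemM : ∀ {i}, i < (sortDesc M).length → (sortDesc M).getD i 0 ∈ M := by
    intro i hi
    have h2 : (sortDesc M).getD i 0 ∈ (↑(sortDesc M) : Multiset ℕ) := mem_of_getD hi
    rwa [coe_sortDesc] at h2
  refine ⟨?_, ?_, ?_, ?_⟩
  · rw [hlenN, hlenM, ← hcN, ← hcM]; exact hle 1 le_rfl
  · rw [hlenN, hlenM, ← hcN, ← hcM]; exact hle' 1 le_rfl
  · intro i hi
    by_contra hc
    push_neg at hc
    set a := (sortDesc M).getD i 0 with ha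
    have haM : a ∈ M := hmemM hi
    have ha1 : 1 ≤ a := hM1 a haM
    have hiN : i < (sortDesc N).length := by
      rw [hlenN, hlenM, ← hcN, ← hcM] at *
      exact lt_of_lt_of_le hi (hle 1 le_rfl)
    have hne : (sortDesc N).getD i 0 ≠ a := by
      intro he
      exact hdisj a (he ▸ hmemN hiN) haM
    have hlt : (sortDesc N).getD i 0 < a := lt_of_le_of_ne hc hne
    have h1 : cnt a N ≤ i := by
      rw [← countP_sortDesc]
      exact ((sorted_getD_lt_iff (sorted_sortDesc N) ha1) i).mp hlt
    have h2 : ¬ (cnt a M ≤ i) := by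
      rw [← countP_sortDesc]
      intro h
      have := ((sorted_getD_lt_iff (sorted_sortDesc M) ha1) i).mpr h
      omega
    have := hle a ha1
    omega
  · intro i hi1
    by_contra hc
    push_neg at hc
    set b := (sortDesc N).getD (i+1) 0 with hb
    have hbN : b ∈ N := hmemN hi1
    have hb1 : 1 ≤ b := hN1 b hbN
    have hltM : (sortDesc M).getD i 0 < b := by
      rcases Nat.lt_or_ge i (sortDesc M).length with h | h
      · have hne : (sortDesc M).getD i 0 ≠ b := by
          intro he
          exact hdisj b hbN (he ▸ hmemM h)
        exact lt_of_le_of_ne hc hne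
      · rw [List.getD_eq_default _ _ h]; omega
    have h1 : cnt b M ≤ i := by
      rw [← countP_sortDesc]
      exact ((sorted_getD_lt_iff (sorted_sortDesc M) hb1) i).mp hltM
    have h2 : ¬ (cnt b N ≤ i + 1) := by
      rw [← countP_sortDesc]
      intro h
      have := ((sorted_getD_lt_iff (sorted_sortDesc N) hb1) (i+1)).mpr h
      omega
    have := hle' b hb1
    omega




open AddSubgroup Function

variable {A B : Type*} [AddCommGroup A] [AddCommGroup B]

def smulHom (A : Type*) [AddCommGroup A] (n : ℕ) : A →+ A :=
  AddMonoidHom.mk' (fun x => n • x) (fun a b => smul_add n a b)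

lemma smulHom_apply (n : ℕ) (x : A) : smulHom A n x = n • x := rfl

def Wk (A : Type*) [AddCommGroup A] (p k : ℕ) : AddSubgroup A := (smulHom A (p ^ k)).range

lemma mem_Wk {p k : ℕ} {x : A} : x ∈ Wk A p k ↔ ∃ y, p ^ k • y = x := Iff.rfl

lemma smul_mem_Wk (p k : ℕ) (y : A) : p ^ k • y ∈ Wk A p k := ⟨y, rfl⟩

lemma Wk_succ_le (p k : ℕ) : Wk A p (k + 1) ≤ Wk A p k := by
  rintro x ⟨y, rfl⟩
  refine ⟨p • y, ?_⟩
  rw [smulHom_apply, smulHom_apply, smul_smul, ← pow_succ]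

lemma smul_mem_Wk_succ (p k : ℕ) {x : A} (hx : x ∈ Wk A p k) : p • x ∈ Wk A p (k + 1) := by
  obtain ⟨y, rfl⟩ := hx
  rw [smulHom_apply, smul_smul, ← pow_succ']
  rw [pow_succ', mul_comm, ← pow_succ]
  exact smul_mem_Wk p (k+1) y

/-- image of `p^k A` inside `A ⧸ p^(k+1) A`. -/
def RqS (A : Type*) [AddCommGroup A] (p k : ℕ) : AddSubgroup (A ⧸ Wk A p (k + 1)) :=
  (Wk A p k).map (QuotientAddGroup.mk' (Wk A p (k + 1)))

noncomputable def rq (A : Type*) [AddCommGroup A] (p k : ℕ) : ℕ := Nat.card (RqS A p k)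

lemma card_eq_ker_mul_range [Finite A] (f : A →+ B) :
    Nat.card A = Nat.card f.ker * Nat.card f.range := by
  rw [AddSubgroup.card_eq_card_quotient_mul_card_addSubgroup f.ker,
    Nat.card_congr (QuotientAddGroup.quotientKerEquivRange f).toEquiv, mul_comm]

lemma card_Wk_eq [Finite A] (p k : ℕ) :
    Nat.card (Wk A p k) = Nat.card (Wk A p (k + 1)) * rq A p k := by
  classical
  set h : (Wk A p k) →+ (A ⧸ Wk A p (k + 1)) :=
    (QuotientAddGroup.mk' (Wk A p (k + 1))).comp (Wk A p k).subtype with hh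
  have hrange : h.range = RqS A p k := by
    ext x
    constructor
    · rintro ⟨⟨y, hy⟩, rfl⟩
      exact ⟨y, hy, rfl⟩
    · rintro ⟨y, hy, rfl⟩
      exact ⟨⟨y, hy⟩, rfl⟩
  have hker : h.ker = (Wk A p (k + 1)).addSubgroupOf (Wk A p k) := by
    ext x
    simp only [hh, AddMonoidHom.mem_ker, AddMonoidHom.comp_apply, AddSubgroup.coe_subtype,
      AddSubgroup.mem_addSubgroupOf]
    exact QuotientAddGroup.eq_zero_iff _
  rw [card_eq_ker_mul_range h, hker, hrange,
    Nat.card_congr (AddSubgroup.addSubgroupOfEquivOfLe (Wk_succ_le p k)).toEquiv]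
  rfl

section surj

variable (f : A →+ B) (p k : ℕ)

lemma Wk_comap_le : Wk A p (k + 1) ≤ (Wk B p (k + 1)).comap f := by
  rintro x ⟨y, rfl⟩
  exact ⟨f y, by rw [smulHom_apply, smulHom_apply, map_nsmul]⟩

noncomputable def fbar : A ⧸ Wk A p (k + 1) →+ B ⧸ Wk B p (k + 1) :=
  QuotientAddGroup.map _ _ f (Wk_comap_le f p k)

lemma fbar_mk (x : A) :
    fbar f p k (QuotientAddGroup.mk' (Wk A p (k+1)) x) = QuotientAddGroup.mk' (Wk B p (k+1)) (f x) :=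
  QuotientAddGroup.map_mk' _ _ _ _ x

lemma fbar_mem (x : A ⧸ Wk A p (k + 1)) (hx : x ∈ RqS A p k) : fbar f p k x ∈ RqS B p k := by
  obtain ⟨z, hz, rfl⟩ := hx
  rw [fbar_mk]
  refine ⟨f z, ?_, rfl⟩
  obtain ⟨y, rfl⟩ := hz
  exact ⟨f y, by rw [smulHom_apply, smulHom_apply, map_nsmul]⟩

noncomputable def phi : RqS A p k →+ RqS B p k :=
  ((fbar f p k).domRestrict (RqS A p k)).codRestrict _ (fun x => fbar_mem f p k x.1 x.2)

lemma phi_surj (hf : Surjective f) : Surjective (phi f p k) := by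
  rintro ⟨w, zb, hzb, rfl⟩
  obtain ⟨b, rfl⟩ := hzb
  obtain ⟨a, rfl⟩ := hf b
  refine ⟨⟨QuotientAddGroup.mk' _ (p ^ k • a), ⟨p ^ k • a, smul_mem_Wk p k a, rfl⟩⟩, ?_⟩
  apply Subtype.ext
  show fbar f p k (QuotientAddGroup.mk' _ (p ^ k • a)) = _
  rw [fbar_mk, map_nsmul]
  rfl

lemma rq_le_of_surj [Finite A] (hf : Surjective f) : rq B p k ≤ rq A p k :=
  Nat.card_le_card_of_surjective _ (phi_surj f p k hf)

end surj

lemma exists_gen {G : Type*} [AddCommGroup G] (c : G) (S : AddSubgroup G)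
    (h : S ≤ zmultiples c) : ∃ z ∈ S, ∀ x ∈ S, ∃ n : ℤ, n • z = x := by
  obtain ⟨d, hd⟩ := Int.subgroup_cyclic (S.comap (zmultiplesHom G c))
  refine ⟨d • c, ?_, ?_⟩
  · have hdmem : d ∈ S.comap (zmultiplesHom G c) := by
      rw [hd]; exact AddSubgroup.subset_closure rfl
    simpa [zmultiplesHom_apply] using hdmem
  · intro x hx
    obtain ⟨m, hm⟩ := AddSubgroup.mem_zmultiples_iff.mp (h hx)
    have hmmem : m ∈ S.comap (zmultiplesHom G c) := by
      simpa [zmultiplesHom_apply, hm] using hx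
    rw [hd] at hmmem
    obtain ⟨n, hn⟩ := AddSubgroup.mem_closure_singleton.mp hmmem
    refine ⟨n, ?_⟩
    rw [smul_smul, ← smul_eq_mul, hn, hm]

lemma rq_le_mul [Finite A] [Finite B] (f : A →+ B) (hf : Surjective f) (c : A)
    (hker : f.ker ≤ zmultiples c) (p k : ℕ) (hp : 0 < p) :
    rq A p k ≤ p * rq B p k := by
  classical
  -- the cyclic subgroup S₀
  obtain ⟨z₀, hz₀S, hz₀gen⟩ := exists_gen c (f.ker ⊓ Wk A p k) (le_trans inf_le_left hker)
  have hz₀W : z₀ ∈ Wk A p k := hz₀S.2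
  set z : RqS A p k := ⟨QuotientAddGroup.mk' _ z₀, ⟨z₀, hz₀W, rfl⟩⟩ with hzdef
  have hpz : p • z = 0 := by
    apply Subtype.ext
    show p • (QuotientAddGroup.mk' (Wk A p (k+1)) z₀ : A ⧸ Wk A p (k + 1)) = 0
    rw [← map_nsmul]
    exact (QuotientAddGroup.eq_zero_iff _).mpr (smul_mem_Wk_succ p k hz₀W)
  have hkersub : ((phi f p k).ker : Set (RqS A p k)) ⊆ (zmultiples z : Set (RqS A p k)) := by
    intro w hw
    obtain ⟨x, hxW, hxeq⟩ := w.2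
    have hfx : f x ∈ Wk B p (k + 1) := by
      have h0 : fbar f p k w.1 = 0 := congrArg Subtype.val hw
      rw [← hxeq, fbar_mk] at h0
      exact (QuotientAddGroup.eq_zero_iff _).mp h0
    obtain ⟨b, hb⟩ := hfx
    obtain ⟨a, rfl⟩ := hf b
    rw [smulHom_apply, ← map_nsmul] at hb
    have hs : x - p ^ (k + 1) • a ∈ f.ker ⊓ Wk A p k := by
      refine AddSubgroup.mem_inf.mpr ⟨?_, ?_⟩
      · rw [AddMonoidHom.mem_ker, map_sub, hb, sub_self]
      · exact sub_mem hxW (Wk_succ_le p k (smul_mem_Wk p (k+1) a))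
    obtain ⟨n, hn⟩ := hz₀gen _ hs
    have hmk : QuotientAddGroup.mk' (Wk A p (k+1)) x
        = QuotientAddGroup.mk' (Wk A p (k+1)) (x - p ^ (k + 1) • a) := by
      rw [eq_comm, QuotientAddGroup.mk'_eq_mk']
      exact ⟨p ^ (k + 1) • a, smul_mem_Wk p (k+1) a, by abel⟩
    refine AddSubgroup.mem_zmultiples_iff.mpr ⟨n, ?_⟩
    apply Subtype.ext
    show n • (QuotientAddGroup.mk' (Wk A p (k+1)) z₀ : A ⧸ Wk A p (k + 1)) = w.1
    rw [← map_zsmul, hn, ← hxeq, ← hmk]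
  have hcardker : Nat.card (phi f p k).ker ≤ p := by
    have h1 : Nat.card (phi f p k).ker ≤ Nat.card (zmultiples z) := by
      apply Nat.card_le_card_of_injective (Set.inclusion hkersub)
      exact Set.inclusion_injective hkersub
    have h2 : Nat.card (zmultiples z) = addOrderOf z := Nat.card_zmultiples z
    have h3 : addOrderOf z ∣ p := addOrderOf_dvd_of_nsmul_eq_zero hpz
    exact le_trans h1 (h2 ▸ Nat.le_of_dvd hp h3)
  have hcard : rq A p k = Nat.card (phi f p k).ker * rq B p k := by
    rw [rq, AddSubgroup.card_eq_card_quotient_mul_card_addSubgroup (phi f p k).ker,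
      Nat.card_congr (QuotientAddGroup.quotientKerEquivOfSurjective _ (phi_surj f p k hf)).toEquiv,
      mul_comm]
    rfl
  rw [hcard]
  exact Nat.mul_le_mul_right _ hcardker

end IP

namespace IP

open AddSubgroup Function

lemma card_ker_smul_zmod {p : ℕ} (hp : p.Prime) (n j : ℕ) :
    Nat.card {x : ZMod (p ^ n) // (p ^ j : ℕ) • x = 0} = p ^ min j n := by
  haveI : NeZero (p ^ n) := ⟨pow_ne_zero n hp.ne_zero⟩
  obtain ⟨j', hj'⟩ : ∃ j', j' = min j n := ⟨_, rfl⟩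
  rw [← hj']
  set w : ZMod (p ^ n) := ((p ^ (n - j') : ℕ) : ZMod (p ^ n)) with hw
  have hj'n : j' ≤ n := by omega
  have hj'j : j' ≤ j := by omega
  have hmem : ∀ x : ZMod (p ^ n), (p ^ j : ℕ) • x = 0 ↔ x ∈ zmultiples w := by
    intro x
    have hv : ((x.val : ℕ) : ZMod (p ^ n)) = x := ZMod.natCast_zmod_val x
    constructor
    · intro hx
      rw [nsmul_eq_mul, ← hv, ← Nat.cast_mul] at hx
      have hdvd : p ^ n ∣ p ^ j * x.val := (ZMod.natCast_eq_zero_iff _ _).mp hx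
      rcases le_or_gt n j with hnj | hnj
      · have hw1 : w = 1 := by
          rw [hw, show n - j' = 0 by omega, pow_zero, Nat.cast_one]
        rw [hw1]
        refine AddSubgroup.mem_zmultiples_iff.mpr ⟨(x.val : ℤ), ?_⟩
        rw [zsmul_eq_mul, mul_one]
        push_cast
        exact hv
      · have hjj : j' = j := by omega
        have hdvd2 : p ^ (n - j) ∣ x.val := by
          have h1 : p ^ j * p ^ (n - j) ∣ p ^ j * x.val := by
            rw [← pow_add, Nat.add_sub_cancel' (le_of_lt hnj)]
            exact hdvd
          exact (Nat.mul_dvd_mul_iff_left (pow_pos hp.pos j)).mp h1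
        obtain ⟨t, ht⟩ := hdvd2
        refine AddSubgroup.mem_zmultiples_iff.mpr ⟨(t : ℤ), ?_⟩
        rw [hw, hjj, zsmul_eq_mul, ← hv, ht]
        push_cast
        ring
    · intro hx
      obtain ⟨m, hm⟩ := AddSubgroup.mem_zmultiples_iff.mp hx
      rw [← hm, smul_comm]
      have hzero : (p ^ j : ℕ) • w = 0 := by
        rw [hw, nsmul_eq_mul, ← Nat.cast_mul, ← pow_add,
          ZMod.natCast_eq_zero_iff]
        exact pow_dvd_pow p (by omega)
      rw [hzero, smul_zero]
  have hc := Nat.card_congr (Equiv.subtypeEquivRight hmem)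
  rw [hc, Nat.card_zmultiples, hw, ZMod.addOrderOf_coe _ (pow_ne_zero n hp.ne_zero)]
  have hgcd : Nat.gcd (p ^ n) (p ^ (n - j')) = p ^ (n - j') :=
    Nat.gcd_eq_right (pow_dvd_pow p (Nat.sub_le n j'))
  rw [hgcd, Nat.pow_div (Nat.sub_le n j') hp.pos]
  congr 1
  omega

lemma card_ker_smul_pi {p : ℕ} (hp : p.Prime) (l : List ℕ) (j : ℕ) :
    Nat.card ((smulHom ((i : Fin l.length) → ZMod (p ^ l.get i)) (p ^ j)).ker)
      = p ^ (Finset.univ.sum fun i : Fin l.length => min j (l.get i)) := by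
  classical
  haveI : ∀ i : Fin l.length, NeZero (p ^ l.get i) := fun i => ⟨pow_ne_zero _ hp.ne_zero⟩
  have e1 : ((smulHom ((i : Fin l.length) → ZMod (p ^ l.get i)) (p ^ j)).ker)
      ≃ {x : (i : Fin l.length) → ZMod (p ^ l.get i) // ∀ i, (p ^ j : ℕ) • x i = 0} := by
    refine Equiv.subtypeEquivRight ?_
    intro x
    rw [AddMonoidHom.mem_ker, smulHom_apply, funext_iff]
    exact forall_congr' fun i => by rw [Pi.smul_apply, Pi.zero_apply]
  have e2 := Equiv.subtypePiEquivPi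
    (p := fun (i : Fin l.length) (y : ZMod (p ^ l.get i)) => (p ^ j : ℕ) • y = 0)
  rw [Nat.card_congr (e1.trans e2), Nat.card_pi]
  rw [← Finset.prod_pow_eq_pow_sum]
  exact Finset.prod_congr rfl fun i _ => card_ker_smul_zmod hp (l.get i) j

lemma countP_eq_sum_ite (l : List ℕ) (P : ℕ → Prop) [DecidablePred P] :
    (Finset.univ.sum fun i : Fin l.length => if P (l.get i) then 1 else 0)
      = Multiset.countP P (↑l : Multiset ℕ) := by
  induction l with
  | nil => simp
  | cons x t ih =>
    rw [show ((x :: t : List ℕ) : Multiset ℕ) = x ::ₘ (↑t : Multiset ℕ) from rfl,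
      Multiset.countP_cons, ← ih]
    have h1 : (∑ i : Fin (t.length + 1), if P ((x :: t).get i) then 1 else 0)
        = (if P x then 1 else 0) + ∑ i : Fin t.length, if P (t.get i) then 1 else 0 := by
      rw [Fin.sum_univ_succ]
      rfl
    have h2 : (∑ i : Fin ((x :: t).length), if P ((x :: t).get i) then 1 else 0)
        = (∑ i : Fin (t.length + 1), if P ((x :: t).get i) then 1 else 0) := rfl
    omega


lemma rq_pi {p : ℕ} (hp : p.Prime) (l : List ℕ) (k : ℕ) :
    rq ((i : Fin l.length) → ZMod (p ^ l.get i)) p k = p ^ cnt (k + 1) (↑l : Multiset ℕ) := by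
  classical
  set X := (i : Fin l.length) → ZMod (p ^ l.get i) with hX
  haveI : ∀ i : Fin l.length, NeZero (p ^ l.get i) := fun i => ⟨pow_ne_zero _ hp.ne_zero⟩
  haveI : Finite X := by
    rw [hX]; infer_instance
  have hrn : ∀ j : ℕ, Nat.card X = Nat.card ((smulHom X (p ^ j)).ker) * Nat.card (Wk X p j) :=
    fun j => card_eq_ker_mul_range (smulHom X (p ^ j))
  have hW := card_Wk_eq (A := X) p k
  have hk1 := hrn k
  have hk2 := hrn (k + 1)
  rw [card_ker_smul_pi hp l k] at hk1
  rw [card_ker_smul_pi hp l (k + 1)] at hk2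
  rw [hW] at hk1
  have hsum : (Finset.univ.sum fun i : Fin l.length => min (k + 1) (l.get i))
      = (Finset.univ.sum fun i : Fin l.length => min k (l.get i))
        + cnt (k + 1) (↑l : Multiset ℕ) := by
    rw [cnt, ← countP_eq_sum_ite l (fun m => k + 1 ≤ m), ← Finset.sum_add_distrib]
    refine Finset.sum_congr rfl fun i _ => ?_
    rcases le_or_gt (k + 1) (l.get i) with h | h
    · rw [if_pos h]; omega
    · rw [if_neg (by omega)]; omega
  rw [hsum, pow_add] at hk2
  have hWpos : 0 < Nat.card (Wk X p (k + 1)) := Nat.card_pos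
  have hppos : 0 < p ^ (Finset.univ.sum fun i : Fin l.length => min k (l.get i)) :=
    pow_pos hp.pos _
  -- hk1 : cardX = p^{Dk} * (card W(k+1) * rq)
  -- hk2 : cardX = p^{Dk} * p^{cnt} * card W(k+1)
  have : p ^ (Finset.univ.sum fun i : Fin l.length => min k (l.get i))
      * (Nat.card (Wk X p (k + 1)) * rq X p k)
      = p ^ (Finset.univ.sum fun i : Fin l.length => min k (l.get i))
      * (Nat.card (Wk X p (k + 1)) * p ^ cnt (k + 1) (↑l : Multiset ℕ)) := by
    rw [← hk1]
    rw [hk2]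
    ring
  have h2 := Nat.eq_of_mul_eq_mul_left hppos this
  exact Nat.eq_of_mul_eq_mul_left hWpos h2

end IP

namespace IP
open AddSubgroup Function

theorem main (G : Type*) [AddCommGroup G] (g : G)
    (hg : IsOfFinAddOrder g) (p : ℕ) [Fact p.Prime]
    (lG lQ : List ℕ)
    (eG : AddCommGroup.primaryComponent G p ≃+ ((i : Fin lG.length) → ZMod (p ^ lG.get i)))
    (eQ : AddCommGroup.primaryComponent (G ⧸ AddSubgroup.zmultiples g) p ≃+
      ((i : Fin lQ.length) → ZMod (p ^ lQ.get i))) :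
    ∀ k : ℕ, cnt (k+1) (↑lQ : Multiset ℕ) ≤ cnt (k+1) (↑lG : Multiset ℕ)
      ∧ cnt (k+1) (↑lG : Multiset ℕ) ≤ cnt (k+1) (↑lQ : Multiset ℕ) + 1 := by
  have hp : p.Prime := Fact.out
  set A := AddCommGroup.primaryComponent G p with hA
  set B := AddCommGroup.primaryComponent (G ⧸ AddSubgroup.zmultiples g) p with hB
  haveI : ∀ i : Fin lG.length, NeZero (p ^ lG.get i) := fun i => ⟨pow_ne_zero _ hp.ne_zero⟩
  haveI : ∀ i : Fin lQ.length, NeZero (p ^ lQ.get i) := fun i => ⟨pow_ne_zero _ hp.ne_zero⟩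
  haveI : Finite A := Finite.of_equiv _ eG.toEquiv.symm
  haveI : Finite B := Finite.of_equiv _ eQ.toEquiv.symm
  set π := QuotientAddGroup.mk' (AddSubgroup.zmultiples g) with hπ
  have hmemB : ∀ x : A, π x.1 ∈ B := by
    rintro ⟨x, hxA⟩
    obtain ⟨n, hn⟩ := AddCommGroup.mem_primaryComponent_iff_addOrderOf.mp hxA
    have hdvd : addOrderOf (π x) ∣ p ^ n := hn ▸ addOrderOf_map_dvd π x
    obtain ⟨m, _, hm⟩ := (Nat.dvd_prime_pow hp).mp hdvd
    exact AddCommGroup.mem_primaryComponent_iff_addOrderOf.mpr ⟨m, hm⟩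
  set f : A →+ B := AddMonoidHom.codRestrict (π.comp A.subtype) B hmemB with hf
  have hfval : ∀ x : A, (f x).1 = π x.1 := fun _ => rfl
  have hfsurj : Surjective f := by
    rintro ⟨y, hy⟩
    obtain ⟨k, hk⟩ := AddCommGroup.mem_primaryComponent_iff_addOrderOf.mp hy
    obtain ⟨x, hx⟩ := QuotientAddGroup.mk'_surjective (AddSubgroup.zmultiples g) y
    have hxfin : IsOfFinAddOrder x := by
      have h1 : π (p ^ k • x) = 0 := by
        rw [map_nsmul, hx, ← hk, addOrderOf_nsmul_eq_zero]
      have h2 : p ^ k • x ∈ AddSubgroup.zmultiples g := (QuotientAddGroup.eq_zero_iff _).mp h1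
      obtain ⟨n, hn⟩ := AddSubgroup.mem_zmultiples_iff.mp h2
      have h3 : (addOrderOf g) • (p ^ k • x) = 0 := by
        rw [← hn, smul_comm, addOrderOf_nsmul_eq_zero, smul_zero]
      rw [isOfFinAddOrder_iff_nsmul_eq_zero]
      exact ⟨addOrderOf g * p ^ k,
        Nat.mul_pos hg.addOrderOf_pos (pow_pos hp.pos k), by rw [mul_smul]; exact h3⟩
    set N := addOrderOf x with hN
    have hN0 : N ≠ 0 := hxfin.addOrderOf_pos.ne'
    set a := N.factorization p with ha
    set m := ordCompl[p] N with hm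
    have hyN : p ^ k ∣ N := by
      rw [← hk, hN, ← hx]
      exact addOrderOf_map_dvd π x
    have hka : k ≤ a := (Nat.Prime.pow_dvd_iff_le_factorization hp hN0).mp hyN
    rcases Nat.eq_zero_or_pos a with ha0 | hapos
    · -- then k = 0, y = 0
      have hk0 : k = 0 := by omega
      have hy0 : y = 0 := by
        rw [← AddMonoid.addOrderOf_eq_one_iff, hk, hk0, pow_zero]
      refine ⟨0, ?_⟩
      apply Subtype.ext
      rw [map_zero]
      exact hy0.symm
    · have h1lt : 1 < p ^ a := Nat.one_lt_pow (by omega) hp.one_lt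
      have hcop : Nat.Coprime m (p ^ a) :=
        Nat.Coprime.pow_right a (Nat.coprime_ordCompl hp hN0).symm
      obtain ⟨u, -, hu⟩ := Nat.exists_mul_mod_eq_one_of_coprime hcop h1lt
      set z := (m * u) • x with hz
      have hz1 : p ^ a • z = 0 := by
        rw [hz, smul_smul, ← mul_assoc]
        have : p ^ a * m = N := Nat.ordProj_mul_ordCompl_eq_self N p
        rw [this, mul_comm, mul_smul, addOrderOf_nsmul_eq_zero, smul_zero]
      have hzA : z ∈ A := by
        have hdvd : addOrderOf z ∣ p ^ a := addOrderOf_dvd_of_nsmul_eq_zero hz1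
        obtain ⟨i, _, hi⟩ := (Nat.dvd_prime_pow hp).mp hdvd
        exact AddCommGroup.mem_primaryComponent_iff_addOrderOf.mpr ⟨i, hi⟩
      have hmu1 : 1 ≤ m * u := by
        rcases Nat.eq_zero_or_pos (m * u) with h0 | h0
        · rw [h0] at hu; simp at hu
        · exact h0
      have hdvd1 : p ^ a ∣ m * u - 1 := by
        refine (Nat.modEq_iff_dvd' hmu1).mp ?_
        have : (1 : ℕ) % p ^ a = 1 := Nat.mod_eq_of_lt h1lt
        unfold Nat.ModEq
        rw [this, hu]
      have hsmuly : (m * u) • y = y := by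
        have hdy : addOrderOf y ∣ m * u - 1 := by
          rw [hk]
          exact dvd_trans (pow_dvd_pow p hka) hdvd1
        have h0 : (m * u - 1) • y = 0 := addOrderOf_dvd_iff_nsmul_eq_zero.mp hdy
        have : m * u = (m * u - 1) + 1 := by omega
        rw [this, add_nsmul, h0, one_nsmul, zero_add]
      refine ⟨⟨z, hzA⟩, ?_⟩
      apply Subtype.ext
      rw [hfval]
      show π z = y
      rw [hz, map_nsmul, hx, hsmuly]
  obtain ⟨c, hc⟩ : ∃ c : A, f.ker ≤ zmultiples c := by
    have hsub : f.ker.map A.subtype ≤ zmultiples g := by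
      rintro _ ⟨x, hx, rfl⟩
      have h0 : π (A.subtype x) = 0 := by
        have := congrArg Subtype.val (AddMonoidHom.mem_ker.mp hx)
        rw [hfval] at this
        exact this
      exact (QuotientAddGroup.eq_zero_iff _).mp h0
    obtain ⟨z₀, hz₀mem, hz₀gen⟩ := exists_gen g _ hsub
    obtain ⟨x₀, hx₀ker, hx₀eq⟩ := hz₀mem
    refine ⟨x₀, ?_⟩
    intro x hx
    have hxm : A.subtype x ∈ f.ker.map A.subtype := ⟨x, hx, rfl⟩
    obtain ⟨n, hn⟩ := hz₀gen _ hxm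
    refine AddSubgroup.mem_zmultiples_iff.mpr ⟨n, ?_⟩
    apply Subtype.coe_injective
    show ((n • x₀ : A) : G) = ((x : A) : G)
    rw [AddSubgroup.coe_zsmul, show ((x₀ : G)) = z₀ from hx₀eq]
    exact hn
  intro k
  have hAX : rq A p k = rq ((i : Fin lG.length) → ZMod (p ^ lG.get i)) p k := by
    refine le_antisymm ?_ ?_
    · exact rq_le_of_surj eG.symm.toAddMonoidHom p k eG.symm.surjective
    · exact rq_le_of_surj eG.toAddMonoidHom p k eG.surjective
  have hBX : rq B p k = rq ((i : Fin lQ.length) → ZMod (p ^ lQ.get i)) p k := by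
    refine le_antisymm ?_ ?_
    · exact rq_le_of_surj eQ.symm.toAddMonoidHom p k eQ.symm.surjective
    · exact rq_le_of_surj eQ.toAddMonoidHom p k eQ.surjective
  have h1 : rq B p k ≤ rq A p k := rq_le_of_surj f p k hfsurj
  have h2 : rq A p k ≤ p * rq B p k := rq_le_mul f hfsurj c hc p k hp.pos
  rw [hAX, hBX, rq_pi hp lG k, rq_pi hp lQ k] at h1 h2
  constructor
  · exact (Nat.pow_le_pow_iff_right hp.one_lt).mp h1
  · have : p * p ^ cnt (k+1) (↑lQ : Multiset ℕ) = p ^ (cnt (k+1) (↑lQ : Multiset ℕ) + 1) := by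
      rw [pow_succ, mul_comm]
    rw [this] at h2
    exact (Nat.pow_le_pow_iff_right hp.one_lt).mp h2

end IP


/-- If `g` is a torsion element of the finitely generated abelian group `G`, then for
every prime `p` the pair `((G/ℤg)(p), G(p))` of `p`-primary components satisfies the
interleaving condition `(**)`: the leftover exponents (after removing the maximal common
sub-multiset, i.e. the multiset intersection) strictly interleave as
`b₁ > a₁ > b₂ > a₂ > ⋯`, with the `b`'s coming from `G(p)` and the `a`'s
from `(G/ℤg)(p)`. -/
theorem interleave_of_torsion (G : Type*) [AddCommGroup G] [AddGroup.FG G] (g : G)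
    (hg : IsOfFinAddOrder g) (p : ℕ) [Fact p.Prime] (SG SQ : Multiset ℕ)
    (hSG : IsExpMultiset p (AddCommGroup.primaryComponent G p) SG)
    (hSQ : IsExpMultiset p
      (AddCommGroup.primaryComponent (G ⧸ AddSubgroup.zmultiples g) p) SQ) :
    Interleave (sortDesc (SG - SQ)) (sortDesc (SQ - SG)) := by
  obtain ⟨hSG1, lG, hlG, ⟨eG⟩⟩ := hSG
  obtain ⟨hSQ1, lQ, hlQ, ⟨eQ⟩⟩ := hSQ
  have key := IP.main G g hg p lG lQ eG eQ
  rw [hlG, hlQ] at key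
  apply IP.interleave_of_counts
  · intro m hm
    exact hSG1 m (Multiset.mem_of_le tsub_le_self hm)
  · intro m hm
    exact hSQ1 m (Multiset.mem_of_le tsub_le_self hm)
  · intro v hvN hvM
    rw [← Multiset.count_pos, Multiset.count_sub] at hvN hvM
    omega
  · intro k hk
    obtain ⟨j, rfl⟩ : ∃ j, k = j + 1 := ⟨k - 1, by omega⟩
    have hcc := IP.cnt_comm_sub (j + 1) SG SQ
    have h1 := (key j).1
    have h2 := (key j).2
    omega
  · intro k hk
    obtain ⟨j, rfl⟩ : ∃ j, k = j + 1 := ⟨k - 1, by omega⟩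
    have hcc := IP.cnt_comm_sub (j + 1) SG SQ
    have h1 := (key j).1
    have h2 := (key j).2
    omega
end

section
/- Let G be a finitely generated abelian group and g ∈ G. If g is not a torsion element, then for every prime p the quotient map induces an isomorphism of p-primary torsion parts only up to the interleaving condition: the pair (G(p), (G/ℤg)(p)) satisfies (**), i.e., the exponents of I((G/ℤg)(p)) not common with I(G(p)) strictly interleave below those of I(G(p)) not common with I((G/ℤg)(p)), with the largest leftover exponent coming from (G/ℤg)(p). -/

private def cnt (S : Multiset ℕ) (k : ℕ) : ℕ := (S.filter (k ≤ ·)).card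

private lemma sortDesc_sorted (s : Multiset ℕ) : (sortDesc s).Pairwise (· ≥ ·) := by
  rw [sortDesc, List.pairwise_reverse]
  exact s.pairwise_sort (· ≤ ·)

private lemma sortDesc_coe (s : Multiset ℕ) : ((sortDesc s) : Multiset ℕ) = s := by
  rw [sortDesc]
  rw [show ((((s.sort (· ≤ ·)).reverse : List ℕ)) : Multiset ℕ) = ((s.sort (· ≤ ·) : List ℕ) : Multiset ℕ) from Quot.sound (List.reverse_perm _)]
  exact s.sort_eq _

private lemma length_sortDesc (s : Multiset ℕ) : (sortDesc s).length = Multiset.card s := by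
  conv_rhs => rw [← sortDesc_coe s]
  exact (Multiset.coe_card _).symm

private lemma mem_of_mem_sortDesc {s : Multiset ℕ} {x : ℕ} (h : x ∈ sortDesc s) : x ∈ s := by
  rw [← sortDesc_coe s]; exact_mod_cast h

private lemma getD_mem {s : Multiset ℕ} {i : ℕ} (h : i < (sortDesc s).length) :
    (sortDesc s).getD i 0 ∈ s := by
  apply mem_of_mem_sortDesc
  rw [List.getD_eq_getElem _ _ h]
  exact List.getElem_mem h

private lemma sorted_filter_length {l : List ℕ} (hl : l.Pairwise (· ≥ ·)) (k i : ℕ) :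
    i < (l.filter (fun x => k ≤ x)).length ↔ i < l.length ∧ k ≤ l.getD i 0 := by
  induction l generalizing i with
  | nil => simp
  | cons x xs ih =>
    rw [List.pairwise_cons] at hl
    obtain ⟨hx, hs⟩ := hl
    by_cases hkx : k ≤ x
    · rw [List.filter_cons_of_pos (by simpa using hkx)]
      cases i with
      | zero => simp [hkx]
      | succ i => simpa using ih hs i
    · rw [List.filter_cons_of_neg (by simpa using hkx)]
      have : xs.filter (fun x => k ≤ x) = [] := by
        rw [List.filter_eq_nil_iff]
        intro a ha
        simp only [decide_eq_true_eq, not_le]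
        exact lt_of_le_of_lt (hx a ha) (not_le.mp hkx)
      rw [this]
      simp only [List.length_nil, Nat.not_lt_zero, false_iff, not_and, not_le]
      intro hi
      cases i with
      | zero => simpa using not_le.mp hkx
      | succ i =>
        rw [List.getD_cons_succ, List.getD_eq_getElem _ _ (by simpa using hi)]
        exact lt_of_le_of_lt (hx _ (List.getElem_mem _)) (not_le.mp hkx)

private lemma cnt_iff (s : Multiset ℕ) (k i : ℕ) :
    i < cnt s k ↔ i < (sortDesc s).length ∧ k ≤ (sortDesc s).getD i 0 := by
  have h1 : cnt s k = ((sortDesc s).filter (fun x => k ≤ x)).length := by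
    rw [cnt]
    conv_lhs => rw [← sortDesc_coe s]
    simp
  rw [h1]
  exact sorted_filter_length (sortDesc_sorted s) k i

private lemma cnt_card {s : Multiset ℕ} (h : ∀ m ∈ s, 1 ≤ m) : cnt s 1 = Multiset.card s := by
  rw [cnt, Multiset.filter_eq_self.mpr h]

private lemma interleave_of_cnt (SQ SG : Multiset ℕ)
    (hQ1 : ∀ m ∈ SQ, 1 ≤ m) (hG1 : ∀ m ∈ SG, 1 ≤ m)
    (H : ∀ k, 1 ≤ k → cnt SG k ≤ cnt SQ k ∧ cnt SQ k ≤ cnt SG k + 1) :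
    Interleave (sortDesc (SQ - SG)) (sortDesc (SG - SQ)) := by
  set D := SQ - SG with hD
  set E := SG - SQ with hE
  have hD1 : ∀ m ∈ D, 1 ≤ m := fun m hm => hQ1 m (Multiset.mem_of_le (Multiset.sub_le_self _ _) hm)
  have hE1 : ∀ m ∈ E, 1 ≤ m := fun m hm => hG1 m (Multiset.mem_of_le (Multiset.sub_le_self _ _) hm)
  have hdisj : ∀ v : ℕ, v ∈ D → v ∉ E := by
    intro v hvD hvE
    rw [hD, ← Multiset.count_pos, Multiset.count_sub] at hvD
    rw [hE, ← Multiset.count_pos, Multiset.count_sub] at hvE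
    omega
  have F1 : ∀ k, 1 ≤ k → cnt E k ≤ cnt D k ∧ cnt D k ≤ cnt E k + 1 := by
    intro k hk
    classical
    have hDf : cnt D k = cnt SQ k - (Multiset.card (SQ.filter (k ≤ ·) ∩ SG.filter (k ≤ ·))) := by
      rw [cnt, hD, Multiset.filter_sub, ← Multiset.sub_inter,
        Multiset.card_sub (Multiset.inter_le_left)]
      rfl
    have hEf : cnt E k = cnt SG k - (Multiset.card (SQ.filter (k ≤ ·) ∩ SG.filter (k ≤ ·))) := by
      rw [cnt, hE, Multiset.filter_sub, ← Multiset.sub_inter,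
        Multiset.card_sub (Multiset.inter_le_left), Multiset.inter_comm]
      rfl
    have h1 : Multiset.card (SQ.filter (k ≤ ·) ∩ SG.filter (k ≤ ·)) ≤ cnt SG k :=
      Multiset.card_le_card (Multiset.inter_le_right)
    have h2 : Multiset.card (SQ.filter (k ≤ ·) ∩ SG.filter (k ≤ ·)) ≤ cnt SQ k :=
      Multiset.card_le_card (Multiset.inter_le_left)
    obtain ⟨hG, hQ⟩ := H k hk
    omega
  refine ⟨?_, ?_, ?_, ?_⟩
  · rw [length_sortDesc, length_sortDesc, ← cnt_card hD1, ← cnt_card hE1]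
    exact (F1 1 le_rfl).1
  · rw [length_sortDesc, length_sortDesc, ← cnt_card hD1, ← cnt_card hE1]
    exact (F1 1 le_rfl).2
  · intro i hi
    set a := (sortDesc E).getD i 0 with ha
    have haE : a ∈ E := getD_mem hi
    have ha1 : 1 ≤ a := hE1 a haE
    have h1 : i < cnt E a := (cnt_iff E a i).mpr ⟨hi, le_rfl⟩
    have h2 : i < cnt D a := lt_of_lt_of_le h1 (F1 a ha1).1
    obtain ⟨hlen, hle⟩ := (cnt_iff D a i).mp h2
    rcases lt_or_eq_of_le hle with h | h
    · exact h
    · exact absurd haE (by rw [h] at haE ⊢; exact hdisj _ (getD_mem hlen))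
  · intro i hi
    set b := (sortDesc D).getD (i+1) 0 with hb
    have hbD : b ∈ D := getD_mem hi
    have hb1 : 1 ≤ b := hD1 b hbD
    have h1 : i + 1 < cnt D b := (cnt_iff D b (i+1)).mpr ⟨hi, le_rfl⟩
    have h2 : i < cnt E b := by have := (F1 b hb1).2; omega
    obtain ⟨hlen, hle⟩ := (cnt_iff E b i).mp h2
    rcases lt_or_eq_of_le hle with h | h
    · exact h
    · exfalso; exact hdisj b hbD (by rw [h]; exact getD_mem hlen)

private def tors (n : ℕ) (X : Type*) [AddCommGroup X] : AddSubgroup X where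
  carrier := {x | n • x = 0}
  zero_mem' := by simp
  add_mem' := by
    intro a b ha hb
    simp only [Set.mem_setOf_eq, smul_add] at *
    rw [ha, hb, add_zero]
  neg_mem' := by
    intro a ha
    simp only [Set.mem_setOf_eq, smul_neg] at *
    rw [ha, neg_zero]

private lemma mem_tors {n : ℕ} {X : Type*} [AddCommGroup X] {x : X} :
    x ∈ tors n X ↔ n • x = 0 := Iff.rfl

/-- counting `m`-torsion in `ZMod n`. -/
private lemma card_tors_zmod (n m : ℕ) (hn : n ≠ 0) :
    Nat.card (tors m (ZMod n)) = n.gcd m := by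
  haveI : NeZero n := ⟨hn⟩
  set f : ZMod n →+ ZMod n := AddMonoidHom.mk' (fun x => m • x) (fun a b => smul_add m a b) with hf
  have hker : f.ker = tors m (ZMod n) := by
    ext x; simp [hf, mem_tors, AddMonoidHom.mem_ker]
  have hrange : f.range = AddSubgroup.zmultiples ((m : ZMod n)) := by
    ext y
    constructor
    · rintro ⟨x, rfl⟩
      refine ⟨(x.val : ℤ), ?_⟩
      simp only [hf, AddMonoidHom.mk'_apply]
      rw [nsmul_eq_mul, zsmul_eq_mul]
      push_cast
      rw [ZMod.natCast_val, ZMod.cast_id]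
      ring
    · rintro ⟨t, rfl⟩
      refine ⟨((t : ℤ) : ZMod n), ?_⟩
      simp only [hf, AddMonoidHom.mk'_apply]
      rw [nsmul_eq_mul, zsmul_eq_mul]
      ring
  have hcard : Nat.card (ZMod n) = Nat.card (ZMod n ⧸ f.ker) * Nat.card f.ker :=
    AddSubgroup.card_eq_card_quotient_mul_card_addSubgroup f.ker
  have hquot : Nat.card (ZMod n ⧸ f.ker) = Nat.card f.range :=
    Nat.card_congr (QuotientAddGroup.quotientKerEquivRange f).toEquiv
  have hr : Nat.card f.range = n / n.gcd m := by
    rw [hrange, Nat.card_zmultiples, ZMod.addOrderOf_coe m hn]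
  have hzn : Nat.card (ZMod n) = n := Nat.card_zmod n
  have hdvd : n.gcd m ∣ n := Nat.gcd_dvd_left n m
  have hgpos : 0 < n.gcd m := Nat.gcd_pos_of_pos_left m (Nat.pos_of_ne_zero hn)
  rw [hquot, hr, hzn, hker] at hcard
  -- n = (n / gcd) * card tors
  have h2 : n / n.gcd m > 0 := Nat.div_pos (Nat.le_of_dvd (Nat.pos_of_ne_zero hn) hdvd) hgpos
  have h3 : n = (n / n.gcd m) * n.gcd m := (Nat.div_mul_cancel hdvd).symm
  exact Nat.eq_of_mul_eq_mul_left h2 (by omega)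

private lemma gcd_pow_pow (p : ℕ) (hp : 1 ≤ p) (a b : ℕ) : (p^a).gcd (p^b) = p ^ (min a b) := by
  rcases le_total a b with h | h
  · rw [min_eq_left h]
    exact Nat.gcd_eq_left (pow_dvd_pow p h)
  · rw [min_eq_right h]
    exact Nat.gcd_eq_right (pow_dvd_pow p h)

/-- transfer torsion counts along an `AddEquiv`. -/
private lemma card_tors_congr {X Y : Type*} [AddCommGroup X] [AddCommGroup Y] (e : X ≃+ Y)
    (n : ℕ) : Nat.card (tors n X) = Nat.card (tors n Y) := by
  apply Nat.card_congr
  refine Equiv.subtypeEquiv e.toEquiv ?_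
  intro x
  simp only [mem_tors, AddEquiv.toEquiv_eq_coe, EquivLike.coe_coe]
  constructor
  · intro h; rw [← map_nsmul, h, map_zero]
  · intro h
    apply e.injective
    rw [map_nsmul, h, map_zero]

private lemma card_tors_pi (p k : ℕ) (hp : 1 ≤ p) (l : List ℕ) :
    Nat.card (tors (p^k) ((i : Fin l.length) → ZMod (p ^ l.get i)))
      = p ^ ((l.map (fun m => min k m)).sum) := by
  have e1 : tors (p^k) ((i : Fin l.length) → ZMod (p ^ l.get i))
      ≃ ((i : Fin l.length) → tors (p^k) (ZMod (p ^ l.get i))) := by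
    refine (Equiv.subtypeEquivRight ?_).trans (Equiv.subtypePiEquivPi (p := fun i x => (p^k) • x = 0))
    intro f
    simp only [mem_tors]
    constructor
    · intro h i; exact congrFun h i
    · intro h; funext i; exact h i
  rw [Nat.card_congr e1, Nat.card_pi]
  have e2 : ∀ i : Fin l.length, Nat.card (tors (p^k) (ZMod (p ^ l.get i))) = p ^ (min k (l.get i)) := by
    intro i
    rw [card_tors_zmod _ _ (pow_ne_zero _ (by omega)), gcd_pow_pow p hp, min_comm]
  calc ∏ i : Fin l.length, Nat.card (tors (p^k) (ZMod (p ^ l.get i)))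
      = ∏ i : Fin l.length, p ^ (min k (l.get i)) := Finset.prod_congr rfl (fun i _ => e2 i)
    _ = p ^ (∑ i : Fin l.length, min k (l.get i)) := Finset.prod_pow_eq_pow_sum _ _ _
    _ = p ^ ((l.map (fun m => min k m)).sum) := by
        congr 1
        rw [← Fin.sum_univ_getElem (l.map (fun m => min k m))]
        apply Fintype.sum_equiv (finCongr (by simp))
        intro i
        simp [List.get_eq_getElem]

section chi
variable {G : Type*} [AddCommGroup G]

private def pr (g : G) : G →+ G ⧸ AddSubgroup.zmultiples g :=
  QuotientAddGroup.mk' (AddSubgroup.zmultiples g)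

private lemma zsmul_inj {g : G} (hg : ¬ IsOfFinAddOrder g) {n n' : ℤ} (h : n • g = n' • g) :
    n = n' := by
  by_contra hne
  apply hg
  exact isOfFinAddOrder_iff_zsmul_eq_zero.mpr
    ⟨n - n', sub_ne_zero.mpr hne, by rw [sub_zsmul, h]; abel⟩

private lemma exists_rep (g : G) (p k : ℕ) (y : G ⧸ AddSubgroup.zmultiples g)
    (hy : y ∈ tors (p^k) (G ⧸ AddSubgroup.zmultiples g)) :
    ∃ (x : G) (n : ℤ), pr g x = y ∧ (p^k : ℕ) • x = n • g := by
  obtain ⟨x, hx⟩ := QuotientAddGroup.mk'_surjective (AddSubgroup.zmultiples g) y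
  have h1 : pr g ((p^k : ℕ) • x) = 0 := by
    rw [map_nsmul]
    rw [show pr g x = y from hx, mem_tors.mp hy]
  have h2 : (p^k : ℕ) • x ∈ AddSubgroup.zmultiples g := (QuotientAddGroup.eq_zero_iff _).mp h1
  obtain ⟨n, hn⟩ := AddSubgroup.mem_zmultiples_iff.mp h2
  exact ⟨x, n, hx, hn.symm⟩

private noncomputable def chifun (g : G) (p K k : ℕ)
    (y : tors (p^k) (G ⧸ AddSubgroup.zmultiples g)) : ZMod (p^K) :=
  (p : ZMod (p^K))^(K-k) * (((exists_rep g p k y.1 y.2).choose_spec.choose : ℤ) : ZMod (p^K))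

private lemma chifun_spec {g : G} (hg : ¬ IsOfFinAddOrder g) (p K k : ℕ) (hk : k ≤ K)
    (y : tors (p^k) (G ⧸ AddSubgroup.zmultiples g)) (x : G) (n : ℤ)
    (hx : pr g x = ↑y) (hn : (p^k : ℕ) • x = n • g) :
    chifun g p K k y = (p : ZMod (p^K))^(K-k) * (n : ZMod (p^K)) := by
  obtain ⟨hx0, hn0⟩ := (exists_rep g p k y.1 y.2).choose_spec.choose_spec
  set x0 := (exists_rep g p k y.1 y.2).choose with hx0def
  set n0 := (exists_rep g p k y.1 y.2).choose_spec.choose with hn0def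
  have h1 : pr g (x - x0) = 0 := by rw [map_sub, hx, hx0, sub_self]
  obtain ⟨m, hm⟩ := AddSubgroup.mem_zmultiples_iff.mp ((QuotientAddGroup.eq_zero_iff _).mp h1)
  have h2 : n • g = (n0 + (p^k : ℤ) * m) • g := by
    rw [← hn]
    have hx' : x = x0 + m • g := by rw [hm]; abel
    rw [hx', smul_add, hn0, add_zsmul]
    congr 1
    rw [← natCast_zsmul, smul_smul]
    push_cast
    ring_nf
  have h3 : n = n0 + (p^k:ℤ) * m := zsmul_inj hg h2
  have hzero : (p : ZMod (p^K))^(K-k) * (p : ZMod (p^K))^k = 0 := by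
    rw [← pow_add, Nat.sub_add_cancel hk, ← Nat.cast_pow, ZMod.natCast_self]
  have hcast : ((n : ℤ) : ZMod (p^K)) = (n0 : ZMod (p^K)) + (p : ZMod (p^K))^k * (m : ZMod (p^K)) := by
    rw [h3]; push_cast; ring
  rw [chifun, hcast, mul_add, ← mul_assoc, hzero, zero_mul, add_zero]

private noncomputable def chi {g : G} (hg : ¬ IsOfFinAddOrder g) (p K k : ℕ) (hk : k ≤ K) :
    tors (p^k) (G ⧸ AddSubgroup.zmultiples g) →+ ZMod (p^K) :=
  AddMonoidHom.mk' (chifun g p K k) (by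
    intro y1 y2
    obtain ⟨x1, n1, hx1, hn1⟩ := exists_rep g p k y1.1 y1.2
    obtain ⟨x2, n2, hx2, hn2⟩ := exists_rep g p k y2.1 y2.2
    have hx : pr g (x1 + x2) = ↑(y1 + y2) := by rw [map_add, hx1, hx2]; rfl
    have hn : (p^k:ℕ) • (x1 + x2) = (n1 + n2) • g := by rw [smul_add, hn1, hn2, add_zsmul]
    rw [chifun_spec hg p K k hk _ _ _ hx hn,
        chifun_spec hg p K k hk y1 _ _ hx1 hn1,
        chifun_spec hg p K k hk y2 _ _ hx2 hn2]
    push_cast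
    ring)

private lemma chi_apply {g : G} (hg : ¬ IsOfFinAddOrder g) (p K k : ℕ) (hk : k ≤ K)
    (y : tors (p^k) (G ⧸ AddSubgroup.zmultiples g)) :
    chi hg p K k hk y = chifun g p K k y := rfl

private def phi (g : G) (p k : ℕ) : tors (p^k) G →+ tors (p^k) (G ⧸ AddSubgroup.zmultiples g) :=
  AddMonoidHom.mk' (fun x => ⟨pr g x.1, by
    have : (p^k : ℕ) • (pr g x.1) = 0 := by rw [← map_nsmul, mem_tors.mp x.2, map_zero]
    exact mem_tors.mpr this⟩)
    (fun a b => Subtype.ext (by simp only [AddSubgroup.coe_add, map_add]))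

private lemma phi_inj {g : G} (hg : ¬ IsOfFinAddOrder g) (p k : ℕ) (hp : p ≠ 0) :
    Function.Injective (phi g p k) := by
  intro a b hab
  have hab' : pr g a.1 = pr g b.1 := Subtype.ext_iff.mp hab
  have h1 : pr g (a.1 - b.1) = 0 := by rw [map_sub, hab', sub_self]
  obtain ⟨m, hm⟩ := AddSubgroup.mem_zmultiples_iff.mp ((QuotientAddGroup.eq_zero_iff _).mp h1)
  have h2 : (p^k : ℕ) • ((a.1 : G) - b.1) = 0 := by
    rw [smul_sub, mem_tors.mp a.2, mem_tors.mp b.2, sub_self]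
  have h3 : (((p^k : ℕ) : ℤ) * m) • g = ((0:ℤ)) • g := by
    rw [← smul_smul, hm, natCast_zsmul, h2, zero_zsmul]
  have h4 : ((p^k : ℕ) : ℤ) * m = 0 := zsmul_inj hg h3
  have hm0 : m = 0 := by
    have hne : ((p^k : ℕ) : ℤ) ≠ 0 := by exact_mod_cast pow_ne_zero k hp
    exact (mul_eq_zero.mp h4).resolve_left hne
  apply Subtype.ext
  have h5 : (a.1 : G) - b.1 = 0 := by rw [← hm, hm0, zero_zsmul]
  exact sub_eq_zero.mp h5

private lemma ker_chi {g : G} (hg : ¬ IsOfFinAddOrder g) (p K k : ℕ) (hp : p ≠ 0) (hk : k ≤ K) :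
    (chi hg p K k hk).ker = (phi g p k).range := by
  ext y
  simp only [AddMonoidHom.mem_ker, AddMonoidHom.mem_range]
  constructor
  · intro h0
    obtain ⟨x, n, hx, hn⟩ := exists_rep g p k y.1 y.2
    rw [chi_apply, chifun_spec hg p K k hk y x n hx hn] at h0
    have h1 : ((((p:ℤ))^(K-k) * n : ℤ) : ZMod (p^K)) = 0 := by push_cast; exact h0
    have h2 : ((p^K : ℕ) : ℤ) ∣ (p:ℤ)^(K-k) * n := (ZMod.intCast_zmod_eq_zero_iff_dvd _ _).mp h1
    have h3 : (p:ℤ)^(K-k) * (p:ℤ)^k ∣ (p:ℤ)^(K-k) * n := by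
      rw [← pow_add, Nat.sub_add_cancel hk]
      exact_mod_cast h2
    have h4 : (p:ℤ)^k ∣ n := by
      have hne : (p:ℤ)^(K-k) ≠ 0 := by
        apply pow_ne_zero; exact_mod_cast hp
      exact (mul_dvd_mul_iff_left hne).mp h3
    obtain ⟨m, hm⟩ := h4
    have hprm : pr g (m • g) = 0 :=
      (QuotientAddGroup.eq_zero_iff _).mpr (AddSubgroup.mem_zmultiples_iff.mpr ⟨m, rfl⟩)
    have hx' : pr g (x - m • g) = ↑y := by rw [map_sub, hx, hprm, sub_zero]
    have hmem : (x - m • g) ∈ tors (p^k) G := by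
      rw [mem_tors, smul_sub, hn, ← natCast_zsmul, smul_smul, hm, sub_eq_zero]
      norm_cast
    exact ⟨⟨x - m • g, hmem⟩, Subtype.ext hx'⟩
  · rintro ⟨x, rfl⟩
    have hx : pr g x.1 = ↑(phi g p k x) := rfl
    have hn : (p^k : ℕ) • (x.1 : G) = (0:ℤ) • g := by rw [mem_tors.mp x.2, zero_zsmul]
    rw [chi_apply, chifun_spec hg p K k hk _ _ _ hx hn, Int.cast_zero, mul_zero]

private lemma tors_mono {X : Type*} [AddCommGroup X] (p j : ℕ) :
    tors (p^j) X ≤ tors (p^(j+1)) X := by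
  intro x hx
  rw [mem_tors] at hx ⊢
  rw [pow_succ, mul_nsmul, hx, smul_zero]

private lemma chi_compat {g : G} (hg : ¬ IsOfFinAddOrder g) (p K j : ℕ) (hj : j + 1 ≤ K)
    (y : G ⧸ AddSubgroup.zmultiples g) (hyj : y ∈ tors (p^j) (G ⧸ AddSubgroup.zmultiples g)) :
    chi hg p K (j+1) hj ⟨y, tors_mono p j hyj⟩
      = chi hg p K j (le_trans (Nat.le_succ j) hj) ⟨y, hyj⟩ := by
  obtain ⟨x, n, hx, hn⟩ := exists_rep g p j y hyj
  have hn1 : (p^(j+1) : ℕ) • x = (((p:ℤ)) * n) • g := by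
    rw [pow_succ, mul_nsmul, hn, ← natCast_zsmul, smul_smul]
  rw [chi_apply, chi_apply,
    chifun_spec hg p K (j+1) hj _ x ((p:ℤ) * n) hx hn1,
    chifun_spec hg p K j (le_trans (Nat.le_succ j) hj) _ x n hx hn]
  push_cast
  rw [← mul_assoc, ← pow_succ]
  have harith : K - (j+1) + 1 = K - j := by omega
  rw [harith]

end chi

section counting
variable {G : Type*} [AddCommGroup G]

private lemma card_factor {g : G} (hg : ¬ IsOfFinAddOrder g) (p K k : ℕ) (hp : p ≠ 0)
    (hk : k ≤ K) :
    Nat.card (tors (p^k) (G ⧸ AddSubgroup.zmultiples g))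
      = Nat.card (tors (p^k) G) * Nat.card (chi hg p K k hk).range := by
  have h1 := AddSubgroup.card_eq_card_quotient_mul_card_addSubgroup (chi hg p K k hk).ker
  have h2 : Nat.card (tors (p^k) (G ⧸ AddSubgroup.zmultiples g) ⧸ (chi hg p K k hk).ker)
      = Nat.card (chi hg p K k hk).range :=
    Nat.card_congr (QuotientAddGroup.quotientKerEquivRange _).toEquiv
  have h3 : Nat.card (chi hg p K k hk).ker = Nat.card (tors (p^k) G) := by
    rw [ker_chi hg p K k hp hk]
    exact (Nat.card_congr (AddMonoidHom.ofInjective (phi_inj hg p k hp)).toEquiv).symm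
  rw [h1, h2, h3, mul_comm]

private lemma range_chi_mono {g : G} (hg : ¬ IsOfFinAddOrder g) (p K j : ℕ) (hj : j + 1 ≤ K) :
    (chi hg p K j (le_trans (Nat.le_succ j) hj)).range ≤ (chi hg p K (j+1) hj).range := by
  rintro z ⟨y, rfl⟩
  exact ⟨⟨y.1, tors_mono p j y.2⟩, by rw [chi_compat hg p K j hj y.1 y.2]⟩

private lemma card_range_chi_mono {g : G} (hg : ¬ IsOfFinAddOrder g) (p K j : ℕ)
    (hj : j + 1 ≤ K) :
    Nat.card (chi hg p K j (le_trans (Nat.le_succ j) hj)).range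
      ∣ Nat.card (chi hg p K (j+1) hj).range :=
  AddSubgroup.card_dvd_of_le (range_chi_mono hg p K j hj)

private lemma card_range_chi_step {g : G} (hg : ¬ IsOfFinAddOrder g) (p K j : ℕ)
    (hp : p ≠ 0) (hj : j + 1 ≤ K) :
    Nat.card (chi hg p K (j+1) hj).range
      ∣ p * Nat.card (chi hg p K j (le_trans (Nat.le_succ j) hj)).range := by
  haveI : NeZero (p ^ K) := ⟨pow_ne_zero _ hp⟩
  set R := (chi hg p K (j+1) hj).range with hR
  set f : R →+ ZMod (p^K) :=
    AddMonoidHom.mk' (fun w => p • (w : ZMod (p^K))) (by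
      intro a b; simp [smul_add]) with hfdef
  have hrange : f.range ≤ (chi hg p K j (le_trans (Nat.le_succ j) hj)).range := by
    rintro z ⟨w, rfl⟩
    obtain ⟨y, hy⟩ := w.2
    have hmem : (p • (y.1 : G ⧸ AddSubgroup.zmultiples g)) ∈
        tors (p^j) (G ⧸ AddSubgroup.zmultiples g) := by
      rw [mem_tors, ← mul_nsmul, ← pow_succ', mem_tors.mp y.2]
    refine ⟨⟨p • y.1, hmem⟩, ?_⟩
    have e1 : chi hg p K (j+1) hj ⟨p • y.1, tors_mono p j hmem⟩
        = chi hg p K j (le_trans (Nat.le_succ j) hj) ⟨p • y.1, hmem⟩ :=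
      chi_compat hg p K j hj _ hmem
    have e2 : (⟨p • y.1, tors_mono p j hmem⟩ :
        tors (p^(j+1)) (G ⧸ AddSubgroup.zmultiples g)) = p • y := by
      apply Subtype.ext; rfl
    have e3 : f w = p • (chi hg p K (j+1) hj y) := by rw [hfdef]; simp only [AddMonoidHom.mk'_apply]; rw [← hy]
    rw [e3, ← map_nsmul, ← e2, e1]
  have hker : ∀ w : f.ker, p • w = (0 : f.ker) := by
    intro w
    apply Subtype.ext
    apply Subtype.ext
    have h0 : f w.1 = 0 := w.2
    have : p • ((w.1 : ZMod (p^K))) = 0 := h0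
    exact this
  have hcyc : IsAddCyclic f.ker := by infer_instance
  have hcardker : Nat.card f.ker ∣ p := by
    obtain ⟨z, hz⟩ := hcyc.exists_generator
    have htop : AddSubgroup.zmultiples z = ⊤ := by
      rw [AddSubgroup.eq_top_iff']
      exact hz
    have h1 : Nat.card f.ker = addOrderOf z := by
      rw [← Nat.card_zmultiples z, htop]
      exact (Nat.card_congr AddSubgroup.topEquiv.toEquiv).symm
    rw [h1]
    exact addOrderOf_dvd_of_nsmul_eq_zero (hker z)
  have h1 := AddSubgroup.card_eq_card_quotient_mul_card_addSubgroup f.ker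
  have h2 : Nat.card (R ⧸ f.ker) = Nat.card f.range :=
    Nat.card_congr (QuotientAddGroup.quotientKerEquivRange _).toEquiv
  have h3 : Nat.card f.range ∣ Nat.card (chi hg p K j (le_trans (Nat.le_succ j) hj)).range :=
    AddSubgroup.card_dvd_of_le hrange
  calc Nat.card R = Nat.card (R ⧸ f.ker) * Nat.card f.ker := h1
    _ = Nat.card f.range * Nat.card f.ker := by rw [h2]
    _ ∣ Nat.card (chi hg p K j (le_trans (Nat.le_succ j) hj)).range * p :=
        mul_dvd_mul h3 hcardker
    _ = p * Nat.card (chi hg p K j (le_trans (Nat.le_succ j) hj)).range := mul_comm _ _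

end counting

private def torsPrimary (G : Type*) [AddCommGroup G] (p k : ℕ) [Fact p.Prime] :
    tors (p^k) ↥(AddCommGroup.primaryComponent G p) ≃ tors (p^k) G where
  toFun a := ⟨(a.1 : G), by
    rw [mem_tors]
    have h1 : ((((p^k : ℕ) • a.1 : ↥(AddCommGroup.primaryComponent G p))) : G)
        = (p^k : ℕ) • (a.1 : G) := by push_cast; ring
    rw [← h1, mem_tors.mp a.2]
    rfl⟩
  invFun x := ⟨⟨x.1, ⟨k, mem_tors.mp x.2⟩⟩, by
    rw [mem_tors]
    apply Subtype.ext
    push_cast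
    exact mem_tors.mp x.2⟩
  left_inv a := by apply Subtype.ext; apply Subtype.ext; rfl
  right_inv x := by apply Subtype.ext; rfl

private def sig (S : Multiset ℕ) (k : ℕ) : ℕ := (S.map (fun m => min k m)).sum

private lemma sig_step (S : Multiset ℕ) (k : ℕ) : sig S (k+1) = sig S k + cnt S (k+1) := by
  induction S using Multiset.induction_on with
  | empty => simp [sig, cnt]
  | cons a s ih =>
    by_cases h : k + 1 ≤ a
    · rw [sig, Multiset.map_cons, Multiset.sum_cons, cnt,
        Multiset.filter_cons_of_pos _ h, Multiset.card_cons,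
        sig, Multiset.map_cons, Multiset.sum_cons]
      rw [sig, sig, cnt] at ih
      have hc : Multiset.card (Multiset.filter (fun x => k + 1 ≤ x) s)
          = Multiset.card (Multiset.filter (LE.le (k+1)) s) := rfl
      omega
    · rw [sig, Multiset.map_cons, Multiset.sum_cons, cnt,
        Multiset.filter_cons_of_neg _ h,
        sig, Multiset.map_cons, Multiset.sum_cons]
      rw [sig, sig, cnt] at ih
      have hc : Multiset.card (Multiset.filter (fun x => k + 1 ≤ x) s)
          = Multiset.card (Multiset.filter (LE.le (k+1)) s) := rfl
      omega

private lemma cnt_eq_zero {S : Multiset ℕ} {k : ℕ} (h : S.sum < k) : cnt S k = 0 := by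
  rw [cnt, Multiset.card_eq_zero]
  rw [Multiset.filter_eq_nil]
  intro a ha hka
  have : a ≤ S.sum := Multiset.single_le_sum (fun x _ => Nat.zero_le x) a ha
  omega

private lemma sig_coe (l : List ℕ) (k : ℕ) :
    ((l : Multiset ℕ).map (fun m => min k m)).sum = (l.map (fun m => min k m)).sum := by
  simp
/-- If `g` is a non-torsion element of the finitely generated abelian group `G`, then for
every prime `p` the pair `(G(p), (G/ℤg)(p))` of `p`-primary components satisfies the
interleaving condition `(**)`: the leftover exponents strictly interleave as
`b₁ > a₁ > b₂ > a₂ > ⋯` with the `b`'s coming from `(G/ℤg)(p)` and the `a`'s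
from `G(p)`, so the largest leftover exponent comes from `(G/ℤg)(p)`. -/
theorem interleave_of_not_torsion (G : Type*) [AddCommGroup G] [AddGroup.FG G] (g : G)
    (hg : ¬ IsOfFinAddOrder g) (p : ℕ) [Fact p.Prime] (SG SQ : Multiset ℕ)
    (hSG : IsExpMultiset p (AddCommGroup.primaryComponent G p) SG)
    (hSQ : IsExpMultiset p
      (AddCommGroup.primaryComponent (G ⧸ AddSubgroup.zmultiples g) p) SQ) :
    Interleave (sortDesc (SQ - SG)) (sortDesc (SG - SQ)) := by
  obtain ⟨hG1, lG, hlG, ⟨eG⟩⟩ := hSG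
  obtain ⟨hQ1, lQ, hlQ, ⟨eQ⟩⟩ := hSQ
  have hpp : p.Prime := Fact.out
  have hp2 : 2 ≤ p := hpp.two_le
  have hp0 : p ≠ 0 := by omega
  set K : ℕ := SG.sum + SQ.sum with hK
  have hTG : ∀ k : ℕ, Nat.card (tors (p^k) G) = p ^ (sig SG k) := by
    intro k
    rw [← Nat.card_congr (torsPrimary G p k), card_tors_congr eG (p^k),
      card_tors_pi p k (by omega) lG]
    congr 1
    rw [sig, ← hlG]
    exact sig_coe lG k
  have hTQ : ∀ k : ℕ, Nat.card (tors (p^k) (G ⧸ AddSubgroup.zmultiples g)) = p ^ (sig SQ k) := by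
    intro k
    rw [← Nat.card_congr (torsPrimary (G ⧸ AddSubgroup.zmultiples g) p k),
      card_tors_congr eQ (p^k), card_tors_pi p k (by omega) lQ]
    congr 1
    rw [sig, ← hlQ]
    exact sig_coe lQ k
  have key : ∀ k, 1 ≤ k → cnt SG k ≤ cnt SQ k ∧ cnt SQ k ≤ cnt SG k + 1 := by
    intro k hk
    by_cases hkK : k ≤ K
    · obtain ⟨j, rfl⟩ : ∃ j, k = j + 1 := ⟨k - 1, by omega⟩
      have hj : j + 1 ≤ K := hkK
      have e1 := card_factor hg p K (j+1) hp0 hj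
      have e2 := card_factor hg p K j hp0 (le_trans (Nat.le_succ j) hj)
      rw [hTQ, hTG] at e1 e2
      set r := Nat.card (chi hg p K (j+1) hj).range with hr
      set r' := Nat.card (chi hg p K j (le_trans (Nat.le_succ j) hj)).range with hr'
      have hrdvd : r ∣ p ^ K := by
        have h := AddSubgroup.card_addSubgroup_dvd_card (chi hg p K (j+1) hj).range
        rwa [Nat.card_zmod] at h
      have hr'dvd : r' ∣ p ^ K := by
        have h := AddSubgroup.card_addSubgroup_dvd_card
          (chi hg p K j (le_trans (Nat.le_succ j) hj)).range
        rwa [Nat.card_zmod] at h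
      obtain ⟨t, htK, ht⟩ := (Nat.dvd_prime_pow hpp).mp hrdvd
      obtain ⟨t', ht'K, ht'⟩ := (Nat.dvd_prime_pow hpp).mp hr'dvd
      have hmono : r' ∣ r := card_range_chi_mono hg p K j hj
      have hstep : r ∣ p * r' := card_range_chi_step hg p K j hp0 hj
      rw [ht, ht'] at hmono hstep
      rw [ht] at e1
      rw [ht'] at e2
      rw [← pow_add] at e1 e2
      have he1 : sig SQ (j+1) = sig SG (j+1) + t := Nat.pow_right_injective hp2 e1
      have he2 : sig SQ j = sig SG j + t' := Nat.pow_right_injective hp2 e2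
      have ht1 : t' ≤ t := (Nat.pow_dvd_pow_iff_le_right (by omega)).mp hmono
      have ht2 : t ≤ t' + 1 := by
        have hd : p^t ∣ p^(t'+1) := by rw [pow_succ']; exact hstep
        exact (Nat.pow_dvd_pow_iff_le_right (by omega)).mp hd
      have s1 := sig_step SG j
      have s2 := sig_step SQ j
      omega
    · have h1 : cnt SG (k) = 0 := cnt_eq_zero (by omega)
      have h2 : cnt SQ (k) = 0 := cnt_eq_zero (by omega)
      omega
  exact interleave_of_cnt SQ SG hQ1 hG1 key
end

section
/- Given a finite multiset S of positive integers (the exponent multiset of T ⊕ T/C for a finite abelian p-group T and cyclic subgroup C with torsion generator), the groups T and T/C are recoverable: letting {c_1 > c_2 > ... > c_{2m}} be the values of odd multiplicity in S, the exponent multiset of T is obtained from the common part (half of S minus the odd-multiplicity values) together with {c_1, c_3, ..., c_{2m−1}}, and that of T/C with {c_2, c_4, ..., c_{2m}}. In particular, T ⊕ (T/C) determines the ordered pair (T, T/C) up to isomorphism. -/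
/-- The values occurring with odd multiplicity in `S`, listed in decreasing order
`c₁ > c₂ > ⋯`. -/
def oddList (S : Multiset ℕ) : List ℕ :=
  sortDesc (S.toFinset.val.filter fun n => Odd (S.count n))


def countGE (X : Multiset ℕ) (n : ℕ) : ℕ := (X.filter (fun v => n ≤ v)).card

lemma countGE_cons (a : ℕ) (X : Multiset ℕ) (n : ℕ) :
    countGE (a ::ₘ X) n = (if n ≤ a then 1 else 0) + countGE X n := by
  unfold countGE
  rw [Multiset.filter_cons]
  split <;> simp [Multiset.card_add]
  omega

lemma countGE_add (X Y : Multiset ℕ) (n : ℕ) :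
    countGE (X + Y) n = countGE X n + countGE Y n := by
  unfold countGE; rw [Multiset.filter_add, Multiset.card_add]

lemma countGE_succ (X : Multiset ℕ) (n : ℕ) :
    countGE X n = X.count n + countGE X (n + 1) := by
  induction X using Multiset.induction with
  | empty => simp [countGE]
  | cons a X ih =>
    rw [countGE_cons, countGE_cons, Multiset.count_cons]
    split_ifs <;> omega

lemma countGE_eq_zero {X : Multiset ℕ} {n : ℕ} (h : ∀ v ∈ X, v < n) : countGE X n = 0 := by
  unfold countGE
  rw [Multiset.card_eq_zero, Multiset.filter_eq_nil]
  intro a ha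
  exact not_le.2 (h a ha)

lemma downward_ind {Q : ℕ → Prop} (bound : ℕ) (base : ∀ n, bound ≤ n → Q n)
    (step : ∀ n, Q (n + 1) → Q n) : ∀ n, Q n := by
  have main : ∀ k n, bound - n ≤ k → Q n := by
    intro k
    induction k with
    | zero => intro n hn; exact base n (by omega)
    | succ k ih =>
      intro n hn
      by_cases h' : bound ≤ n
      · exact base n h'
      · exact step n (ih (n + 1) (by omega))
  exact fun n => main bound n (by omega)



lemma coe_oddList (S : Multiset ℕ) :
    (↑(oddList S) : Multiset ℕ) = S.toFinset.val.filter fun n => Odd (S.count n) := by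
  unfold oddList sortDesc
  rw [Multiset.coe_reverse, Multiset.sort_eq]

lemma nodup_oddList (S : Multiset ℕ) : (oddList S).Nodup := by
  have h : (↑(oddList S) : Multiset ℕ).Nodup := by
    rw [coe_oddList]; exact Multiset.Nodup.filter _ S.toFinset.nodup
  exact h

lemma mem_oddList {S : Multiset ℕ} {n : ℕ} : n ∈ oddList S ↔ Odd (S.count n) := by
  have : n ∈ oddList S ↔ n ∈ (↑(oddList S) : Multiset ℕ) := by simp
  rw [this, coe_oddList, Multiset.mem_filter]
  constructor
  · exact fun h => h.2
  · intro h
    refine ⟨Multiset.mem_toFinset.2 ?_, h⟩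
    rw [← Multiset.count_pos]
    rcases h with ⟨m, hm⟩; omega

lemma sorted_oddList (S : Multiset ℕ) : (oddList S).Pairwise (· > ·) := by
  have h1 : (oddList S).Pairwise (fun a b => b ≤ a) := by
    unfold oddList sortDesc
    rw [List.pairwise_reverse]
    exact Multiset.pairwise_sort _ _
  have h2 := List.Pairwise.and h1 (nodup_oddList S)
  exact h2.imp (fun h => lt_of_le_of_ne h.1 (Ne.symm h.2))

lemma countGE_get {L : List ℕ} (hs : L.Pairwise (· > ·)) (i : ℕ) (h : i < L.length) :
    countGE ↑L (L.get ⟨i, h⟩ + 1) = i ∧ countGE ↑L (L.get ⟨i, h⟩) = i + 1 := by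
  induction L generalizing i with
  | nil => simp at h
  | cons a L ih =>
    have ha : ∀ b ∈ L, b < a := fun b hb => (List.pairwise_cons.1 hs).1 b hb
    have hL : L.Pairwise (· > ·) := (List.pairwise_cons.1 hs).2
    cases i with
    | zero =>
      have hget : (a :: L).get ⟨0, h⟩ = a := rfl
      rw [hget]
      have h0 : countGE ↑L (a + 1) = 0 :=
        countGE_eq_zero (fun v hv => by have := ha v (by exact_mod_cast hv); omega)
      have h1 : countGE ↑L a = 0 :=
        countGE_eq_zero (fun v hv => ha v (by exact_mod_cast hv))
      constructor
      · rw [show ((a :: L : List ℕ) : Multiset ℕ) = a ::ₘ ↑L from rfl, countGE_cons]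
        simp [h0]
      · rw [show ((a :: L : List ℕ) : Multiset ℕ) = a ::ₘ ↑L from rfl, countGE_cons]
        simp [h1]
    | succ i =>
      have h' : i < L.length := by simpa using h
      have hget : (a :: L).get ⟨i + 1, h⟩ = L.get ⟨i, h'⟩ := rfl
      rw [hget]
      have hlt : L.get ⟨i, h'⟩ < a := ha _ (L.get_mem _)
      obtain ⟨ih1, ih2⟩ := ih hL i h'
      constructor
      · rw [show ((a :: L : List ℕ) : Multiset ℕ) = a ::ₘ ↑L from rfl, countGE_cons]
        rw [if_pos (by omega), ih1]
        omega
      · rw [show ((a :: L : List ℕ) : Multiset ℕ) = a ::ₘ ↑L from rfl, countGE_cons]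
        rw [if_pos (by omega), ih2]
        omega

def Ppar (S : Multiset ℕ) (n : ℕ) : ℕ := countGE ↑(oddList S) n % 2

lemma count_coe_oddList (S : Multiset ℕ) (n : ℕ) :
    Multiset.count n ↑(oddList S) = (S.count n) % 2 := by
  rcases em (n ∈ oddList S) with h | h
  · rw [Multiset.count_eq_one_of_mem (Multiset.coe_nodup.2 (nodup_oddList S)) (by exact_mod_cast h)]
    have := mem_oddList.1 h
    rw [Nat.odd_iff] at this; omega
  · rw [Multiset.count_eq_zero_of_notMem (by exact_mod_cast h)]
    have : ¬ Odd (S.count n) := fun hc => h (mem_oddList.2 hc)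
    rw [Nat.odd_iff] at this; omega

lemma Dform {B A : Multiset ℕ}
    (key : ∀ n, countGE A (n + 1) ≤ countGE B (n + 1) ∧
      countGE B (n + 1) ≤ countGE A (n + 1) + 1) :
    ∀ n, countGE B (n + 1) = countGE A (n + 1) + Ppar (B + A) (n + 1) := by
  set S := B + A with hS
  have memS : ∀ v, v ∈ oddList S → v ∈ S := by
    intro v hv
    have := mem_oddList.1 hv
    rw [← Multiset.count_pos]
    rcases this with ⟨m, hm⟩; omega
  refine downward_ind (S.sup) ?_ ?_
  · intro n hn
    have hB0 : countGE B (n + 1) = 0 := countGE_eq_zero (fun v hv => by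
      have : v ∈ S := by rw [hS]; exact Multiset.mem_add.2 (Or.inl hv)
      have := Multiset.le_sup (α := ℕ) this
      omega)
    have hA0 : countGE A (n + 1) = 0 := countGE_eq_zero (fun v hv => by
      have : v ∈ S := by rw [hS]; exact Multiset.mem_add.2 (Or.inr hv)
      have := Multiset.le_sup (α := ℕ) this
      omega)
    have hL0 : countGE ↑(oddList S) (n + 1) = 0 := countGE_eq_zero (fun v hv => by
      have := Multiset.le_sup (α := ℕ) (memS v (by exact_mod_cast hv))
      omega)
    rw [hB0, hA0]
    unfold Ppar
    rw [hL0]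
  · intro n ih
    have hkn := key n
    have h1 := countGE_succ B (n + 1)
    have h2 := countGE_succ A (n + 1)
    have h3 := countGE_succ (↑(oddList S) : Multiset ℕ) (n + 1)
    have h4 := count_coe_oddList S (n + 1)
    have h5 : S.count (n + 1) = B.count (n + 1) + A.count (n + 1) := by
      rw [hS]; exact Multiset.count_add _ _ _
    unfold Ppar at ih ⊢
    omega

section
variable {B A : Multiset ℕ}
  (key : ∀ n, countGE A (n + 1) ≤ countGE B (n + 1) ∧
      countGE B (n + 1) ≤ countGE A (n + 1) + 1)

include key in
lemma count_rel : ∀ n, B.count (n + 1) + Ppar (B + A) (n + 2) =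
    A.count (n + 1) + Ppar (B + A) (n + 1) := by
  intro n
  have d1 := Dform key n
  have d2 := Dform key (n + 1)
  have h1 := countGE_succ B (n + 1)
  have h2 := countGE_succ A (n + 1)
  show B.count (n+1) + Ppar (B+A) (n+1+1) = A.count (n+1) + Ppar (B+A) (n+1)
  omega

-- characterization of the toggle positions
lemma toggle_char (S : Multiset ℕ) (n r : ℕ) (hr : r ≤ 1) :
    (Ppar S n = 1 - r ∧ Ppar S (n + 1) = r) ↔
      ∃ j, ∃ hj : j < (oddList S).length, j % 2 = r ∧ (oddList S).get ⟨j, hj⟩ = n := by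
  set L := oddList S with hL
  rcases em (n ∈ L) with h | h
  · obtain ⟨⟨j, hj⟩, hget⟩ := List.mem_iff_get.1 h
    have c1 : countGE ↑L (n + 1) = j := by rw [← hget]; exact (countGE_get (sorted_oddList S) j hj).1
    have c2 : countGE ↑L n = j + 1 := by rw [← hget]; exact (countGE_get (sorted_oddList S) j hj).2
    have hinj := List.nodup_iff_injective_get.1 (nodup_oddList S)
    constructor
    · rintro ⟨hp1, hp2⟩
      unfold Ppar at hp1 hp2
      rw [c1] at hp2; rw [c2] at hp1
      exact ⟨j, hj, by omega, hget⟩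
    · rintro ⟨j', hj', hpar, hget'⟩
      have : (⟨j', hj'⟩ : Fin L.length) = ⟨j, hj⟩ := hinj (by rw [hget, hget'])
      have hjj : j' = j := by exact_mod_cast congrArg Fin.val this
      unfold Ppar
      rw [c1, c2]
      omega
  · have hc : Multiset.count n ↑L = 0 :=
      Multiset.count_eq_zero_of_notMem (by exact_mod_cast h)
    have heq : countGE ↑L n = countGE ↑L (n + 1) := by
      have := countGE_succ (↑L : Multiset ℕ) n; omega
    constructor
    · rintro ⟨hp1, hp2⟩
      unfold Ppar at hp1 hp2
      rw [← hL] at hp1 hp2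
      omega
    · rintro ⟨j, hj, _, hget⟩
      exact absurd (hget ▸ L.get_mem _) h
end

lemma Ppar_le (S : Multiset ℕ) (n : ℕ) : Ppar S n ≤ 1 := by unfold Ppar; omega

section
variable {B A : Multiset ℕ}
  (key : ∀ n, countGE A (n + 1) ≤ countGE B (n + 1) ∧
      countGE B (n + 1) ≤ countGE A (n + 1) + 1)

include key in
lemma goal1 (hB1 : ∀ m ∈ B, 1 ≤ m) (hA1 : ∀ m ∈ A, 1 ≤ m) :
    B - A = ↑(List.ofFn fun i : Fin (((oddList (B + A)).length + 1) / 2) =>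
        (oddList (B + A)).getD (2 * (i : ℕ)) 0) := by
  set S := B + A with hS
  set L := oddList S with hL
  have hlen : ∀ i : Fin ((L.length + 1) / 2), 2 * (i : ℕ) < L.length := fun i => by
    have := i.2; omega
  have hf : ∀ i : Fin ((L.length + 1) / 2),
      L.getD (2 * (i : ℕ)) 0 = L.get ⟨2 * (i : ℕ), hlen i⟩ := fun i => by
    rw [List.getD_eq_getElem L 0 (hlen i)]; rfl
  have hLpos : ∀ x ∈ L, 1 ≤ x := by
    intro x hx
    have := mem_oddList.1 (hL ▸ hx)
    have hxS : x ∈ S := by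
      rw [← Multiset.count_pos]; rcases this with ⟨m, hm⟩; omega
    rcases Multiset.mem_add.1 (hS ▸ hxS) with h | h
    · exact hB1 x h
    · exact hA1 x h
  have hinj := List.nodup_iff_injective_get.1 (hL ▸ nodup_oddList S)
  have hnodup : (List.ofFn fun i : Fin ((L.length + 1) / 2) =>
      L.getD (2 * (i : ℕ)) 0).Nodup := by
    rw [List.nodup_ofFn]
    intro i i' hii
    have hii' : L.get ⟨2 * (i : ℕ), hlen i⟩ = L.get ⟨2 * (i' : ℕ), hlen i'⟩ :=
      (hf i).symm.trans ((hii : L.getD (2 * (i : ℕ)) 0 = L.getD (2 * (i' : ℕ)) 0).trans (hf i'))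
    have := hinj hii'
    have h2 : 2 * (i : ℕ) = 2 * (i' : ℕ) := by exact_mod_cast congrArg Fin.val this
    exact Fin.ext (by omega)
  have hmem_iff : ∀ x, x ∈ (List.ofFn fun i : Fin ((L.length + 1) / 2) =>
      L.getD (2 * (i : ℕ)) 0) ↔ ∃ i : Fin ((L.length + 1) / 2), L.getD (2 * (i : ℕ)) 0 = x := by
    intro x
    rw [List.mem_ofFn]
  rw [Multiset.ext]
  intro n
  rw [Multiset.count_sub]
  cases n with
  | zero =>
    have e1 : Multiset.count 0 B = 0 :=
      Multiset.count_eq_zero_of_notMem (fun h => by have := hB1 0 h; omega)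
    have e3 : Multiset.count 0 (↑(List.ofFn fun i : Fin ((L.length + 1) / 2) =>
        L.getD (2 * (i : ℕ)) 0) : Multiset ℕ) = 0 := by
      refine Multiset.count_eq_zero_of_notMem (fun h => ?_)
      obtain ⟨i, hi⟩ := (hmem_iff 0).1 (Multiset.mem_coe.1 h)
      have hi' : L.get ⟨2 * (i : ℕ), hlen i⟩ = 0 := (hf i).symm.trans hi
      have := hLpos _ (hi' ▸ L.get_mem _)
      omega
    rw [e1, e3]; omega
  | succ m =>
    have hcr := count_rel key m
    rw [← hS] at hcr
    have hp1 : Ppar S (m + 1) ≤ 1 := Ppar_le _ _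
    have hp2 : Ppar S (m + 2) ≤ 1 := Ppar_le _ _
    rcases em ((m + 1) ∈ (List.ofFn fun i : Fin ((L.length + 1) / 2) =>
        L.getD (2 * (i : ℕ)) 0)) with hmem | hmem
    · have e1 : Multiset.count (m + 1) (↑(List.ofFn fun i : Fin ((L.length + 1) / 2) =>
          L.getD (2 * (i : ℕ)) 0) : Multiset ℕ) = 1 :=
        Multiset.count_eq_one_of_mem (Multiset.coe_nodup.2 hnodup) (Multiset.mem_coe.2 hmem)
      rw [e1]
      obtain ⟨i, hi⟩ := (hmem_iff _).1 hmem
      have hi' : L.get ⟨2 * (i : ℕ), hlen i⟩ = m + 1 := (hf i).symm.trans hi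
      have htc := (toggle_char S (m + 1) 0 (by omega)).2 ⟨2 * (i : ℕ), hlen i, by omega, hi'⟩
      have htc1 : Ppar S (m + 1) = 1 := htc.1
      have htc2 : Ppar S (m + 2) = 0 := htc.2
      omega
    · have e1 : Multiset.count (m + 1) (↑(List.ofFn fun i : Fin ((L.length + 1) / 2) =>
          L.getD (2 * (i : ℕ)) 0) : Multiset ℕ) = 0 :=
        Multiset.count_eq_zero_of_notMem (fun h => hmem (Multiset.mem_coe.1 h))
      rw [e1]
      have hnt : ¬ (Ppar S (m + 1) = 1 ∧ Ppar S (m + 2) = 0) := by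
        rintro ⟨hc1, hc2⟩
        obtain ⟨j, hj, hjpar, hget⟩ := (toggle_char S (m + 1) 0 (by omega)).1 ⟨hc1, hc2⟩
        have hj' : j < L.length := hj
        apply hmem
        rw [hmem_iff]
        refine ⟨⟨j / 2, by omega⟩, ?_⟩
        show L.getD (2 * (j / 2)) 0 = m + 1
        have h2j : 2 * (j / 2) = j := by omega
        rw [h2j, List.getD_eq_getElem L 0 hj']
        exact hget
      omega
include key in
lemma goal2 (hB1 : ∀ m ∈ B, 1 ≤ m) (hA1 : ∀ m ∈ A, 1 ≤ m) :
    A - B = ↑(List.ofFn fun i : Fin ((oddList (B + A)).length / 2) =>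
        (oddList (B + A)).getD (2 * (i : ℕ) + 1) 0) := by
  set S := B + A with hS
  set L := oddList S with hL
  have hlen : ∀ i : Fin (L.length / 2), 2 * (i : ℕ) + 1 < L.length := fun i => by
    have := i.2; omega
  have hf : ∀ i : Fin (L.length / 2),
      L.getD (2 * (i : ℕ) + 1) 0 = L.get ⟨2 * (i : ℕ) + 1, hlen i⟩ := fun i => by
    rw [List.getD_eq_getElem L 0 (hlen i)]; rfl
  have hLpos : ∀ x ∈ L, 1 ≤ x := by
    intro x hx
    have := mem_oddList.1 (hL ▸ hx)
    have hxS : x ∈ S := by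
      rw [← Multiset.count_pos]; rcases this with ⟨m, hm⟩; omega
    rcases Multiset.mem_add.1 (hS ▸ hxS) with h | h
    · exact hB1 x h
    · exact hA1 x h
  have hinj := List.nodup_iff_injective_get.1 (hL ▸ nodup_oddList S)
  have hnodup : (List.ofFn fun i : Fin (L.length / 2) =>
      L.getD (2 * (i : ℕ) + 1) 0).Nodup := by
    rw [List.nodup_ofFn]
    intro i i' hii
    have hii' : L.get ⟨2 * (i : ℕ) + 1, hlen i⟩ = L.get ⟨2 * (i' : ℕ) + 1, hlen i'⟩ :=
      (hf i).symm.trans ((hii : L.getD (2 * (i : ℕ) + 1) 0 = L.getD (2 * (i' : ℕ) + 1) 0).trans (hf i'))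
    have := hinj hii'
    have h2 : 2 * (i : ℕ) + 1 = 2 * (i' : ℕ) + 1 := by exact_mod_cast congrArg Fin.val this
    exact Fin.ext (by omega)
  have hmem_iff : ∀ x, x ∈ (List.ofFn fun i : Fin (L.length / 2) =>
      L.getD (2 * (i : ℕ) + 1) 0) ↔ ∃ i : Fin (L.length / 2), L.getD (2 * (i : ℕ) + 1) 0 = x := by
    intro x
    rw [List.mem_ofFn]
  rw [Multiset.ext]
  intro n
  rw [Multiset.count_sub]
  cases n with
  | zero =>
    have e1 : Multiset.count 0 A = 0 :=
      Multiset.count_eq_zero_of_notMem (fun h => by have := hA1 0 h; omega)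
    have e3 : Multiset.count 0 (↑(List.ofFn fun i : Fin (L.length / 2) =>
        L.getD (2 * (i : ℕ) + 1) 0) : Multiset ℕ) = 0 := by
      refine Multiset.count_eq_zero_of_notMem (fun h => ?_)
      obtain ⟨i, hi⟩ := (hmem_iff 0).1 (Multiset.mem_coe.1 h)
      have hi' : L.get ⟨2 * (i : ℕ) + 1, hlen i⟩ = 0 := (hf i).symm.trans hi
      have := hLpos _ (hi' ▸ L.get_mem _)
      omega
    rw [e1, e3]; omega
  | succ m =>
    have hcr := count_rel key m
    rw [← hS] at hcr
    have hp1 : Ppar S (m + 1) ≤ 1 := Ppar_le _ _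
    have hp2 : Ppar S (m + 2) ≤ 1 := Ppar_le _ _
    rcases em ((m + 1) ∈ (List.ofFn fun i : Fin (L.length / 2) =>
        L.getD (2 * (i : ℕ) + 1) 0)) with hmem | hmem
    · have e1 : Multiset.count (m + 1) (↑(List.ofFn fun i : Fin (L.length / 2) =>
          L.getD (2 * (i : ℕ) + 1) 0) : Multiset ℕ) = 1 :=
        Multiset.count_eq_one_of_mem (Multiset.coe_nodup.2 hnodup) (Multiset.mem_coe.2 hmem)
      rw [e1]
      obtain ⟨i, hi⟩ := (hmem_iff _).1 hmem
      have hi' : L.get ⟨2 * (i : ℕ) + 1, hlen i⟩ = m + 1 := (hf i).symm.trans hi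
      have htc := (toggle_char S (m + 1) 1 (by omega)).2 ⟨2 * (i : ℕ) + 1, hlen i, by omega, hi'⟩
      have htc1 : Ppar S (m + 1) = 0 := htc.1
      have htc2 : Ppar S (m + 2) = 1 := htc.2
      omega
    · have e1 : Multiset.count (m + 1) (↑(List.ofFn fun i : Fin (L.length / 2) =>
          L.getD (2 * (i : ℕ) + 1) 0) : Multiset ℕ) = 0 :=
        Multiset.count_eq_zero_of_notMem (fun h => hmem (Multiset.mem_coe.1 h))
      rw [e1]
      have hnt : ¬ (Ppar S (m + 1) = 0 ∧ Ppar S (m + 2) = 1) := by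
        rintro ⟨hc1, hc2⟩
        obtain ⟨j, hj, hjpar, hget⟩ := (toggle_char S (m + 1) 1 (by omega)).1 ⟨hc1, hc2⟩
        have hj' : j < L.length := hj
        apply hmem
        rw [hmem_iff]
        refine ⟨⟨j / 2, by omega⟩, ?_⟩
        show L.getD (2 * (j / 2) + 1) 0 = m + 1
        have h2j : 2 * (j / 2) + 1 = j := by omega
        rw [h2j, List.getD_eq_getElem L 0 hj']
        exact hget
      omega


include key in
lemma goal3 (hB1 : ∀ m ∈ B, 1 ≤ m) (hA1 : ∀ m ∈ A, 1 ≤ m) :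
    (A ∩ B) + (A ∩ B) = (B + A) - ↑(oddList (B + A)) := by
  rw [Multiset.ext]
  intro n
  rw [Multiset.count_add, Multiset.count_inter, Multiset.count_sub, Multiset.count_add,
    count_coe_oddList]
  cases n with
  | zero =>
    have e1 : Multiset.count 0 B = 0 :=
      Multiset.count_eq_zero_of_notMem (fun h => by have := hB1 0 h; omega)
    have e2 : Multiset.count 0 A = 0 :=
      Multiset.count_eq_zero_of_notMem (fun h => by have := hA1 0 h; omega)
    rw [e1, e2]
    simp
  | succ m =>
    have hcr := count_rel key m
    unfold Ppar at hcr
    have h3 := countGE_succ (↑(oddList (B + A)) : Multiset ℕ) (m + 1)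
    have h4 := count_coe_oddList (B + A) (m + 1)
    have h5 : (B + A).count (m + 1) = B.count (m + 1) + A.count (m + 1) :=
      Multiset.count_add _ _ _
    omega

lemma goal4 : B = (A ∩ B) + (B - A) := by
  rw [Multiset.ext]
  intro n
  rw [Multiset.count_add, Multiset.count_inter, Multiset.count_sub]
  omega

lemma goal5 : A = (A ∩ B) + (A - B) := by
  rw [Multiset.ext]
  intro n
  rw [Multiset.count_add, Multiset.count_inter, Multiset.count_sub]
  omega

include key in
lemma unique {B' A' : Multiset ℕ}
    (key' : ∀ n, countGE A' (n + 1) ≤ countGE B' (n + 1) ∧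
      countGE B' (n + 1) ≤ countGE A' (n + 1) + 1)
    (hB1 : ∀ m ∈ B, 1 ≤ m) (hB1' : ∀ m ∈ B', 1 ≤ m)
    (hSS : B + A = B' + A') : B = B' ∧ A = A' := by
  have hcg : ∀ m, countGE B (m + 1) = countGE B' (m + 1) := by
    intro m
    have d := Dform key m
    have d' := Dform key' m
    have h1 := countGE_add B A (m + 1)
    have h2 := countGE_add B' A' (m + 1)
    rw [← hSS] at h2 d'
    omega
  have hB : B = B' := by
    rw [Multiset.ext]
    intro n
    cases n with
    | zero =>
      rw [Multiset.count_eq_zero_of_notMem (fun h => by have := hB1 0 h; omega),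
        Multiset.count_eq_zero_of_notMem (fun h => by have := hB1' 0 h; omega)]
    | succ m =>
      have e1 := countGE_succ B (m + 1)
      have e2 := countGE_succ B' (m + 1)
      have g1 := hcg m
      have g2 := hcg (m + 1)
      omega
  exact ⟨hB, by rwa [hB, add_right_inj] at hSS⟩
end


lemma range_smul_zmod (N c : ℕ) (hN : N ≠ 0) :
    Set.range (fun x : ZMod N => c • x) = ↑(AddSubgroup.zmultiples ((c : ZMod N))) := by
  haveI : NeZero N := ⟨hN⟩
  ext y
  constructor
  · rintro ⟨x, rfl⟩
    simp only [SetLike.mem_coe]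
    rw [AddSubgroup.mem_zmultiples_iff]
    refine ⟨(x.val : ℤ), ?_⟩
    rw [zsmul_eq_mul]
    push_cast
    rw [ZMod.natCast_val, ZMod.cast_id, mul_comm, ← nsmul_eq_mul]
  · intro hy
    rw [SetLike.mem_coe, AddSubgroup.mem_zmultiples_iff] at hy
    obtain ⟨k, hk⟩ := hy
    refine ⟨((k : ZMod N)), ?_⟩
    show c • ((k : ℤ) : ZMod N) = y
    rw [← hk, zsmul_eq_mul, nsmul_eq_mul, mul_comm]

lemma card_smul_zmod (p m k : ℕ) (hp : p.Prime) :
    Nat.card (Set.range (fun x : ZMod (p ^ m) => (p ^ k) • x)) = p ^ (m - k) := by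
  have hN : (p : ℕ) ^ m ≠ 0 := pow_ne_zero _ hp.ne_zero
  rw [range_smul_zmod _ _ hN]
  have h1 : Nat.card ↥(AddSubgroup.zmultiples (((p ^ k : ℕ) : ZMod (p ^ m)))) =
      addOrderOf (((p ^ k : ℕ) : ZMod (p ^ m))) := Nat.card_zmultiples _
  have h2 : addOrderOf (((p ^ k : ℕ) : ZMod (p ^ m))) = p ^ m / (p ^ m).gcd (p ^ k) :=
    ZMod.addOrderOf_coe _ hN
  have h3 : p ^ m / (p ^ m).gcd (p ^ k) = p ^ (m - k) := by
    rcases le_total k m with h | h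
    · rw [Nat.gcd_eq_right (pow_dvd_pow p h), Nat.pow_div h hp.pos]
    · rw [Nat.gcd_eq_left (pow_dvd_pow p h), Nat.div_self (by positivity),
        Nat.sub_eq_zero_of_le h, pow_zero]
  exact h1.trans (h2.trans h3)

lemma range_smul_equiv {M N : Type*} [AddCommGroup M] [AddCommGroup N] (e : M ≃+ N) (c : ℕ) :
    Set.range (fun y : N => c • y) = ⇑e '' Set.range (fun x : M => c • x) := by
  ext y
  constructor
  · rintro ⟨x, rfl⟩
    exact ⟨c • e.symm x, ⟨e.symm x, rfl⟩, by rw [map_nsmul]; simp⟩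
  · rintro ⟨z, ⟨x, rfl⟩, rfl⟩
    refine ⟨e x, ?_⟩
    show c • e x = e (c • x)
    rw [map_nsmul]

lemma card_smul_range {p : ℕ} (hp : p.Prime) {M : Type*} [AddCommGroup M] {X : Multiset ℕ}
    (hX : IsExpMultiset p M X) (k : ℕ) :
    Nat.card (Set.range (fun x : M => (p ^ k) • x)) = p ^ ((X.map (fun b => b - k)).sum) := by
  obtain ⟨hX1, l, hl, ⟨e⟩⟩ := hX
  rw [← Nat.card_image_of_injective e.injective, ← range_smul_equiv e (p ^ k)]
  have hpi : (fun y : ((i : Fin l.length) → ZMod (p ^ l.get i)) => (p ^ k) • y) =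
      Pi.map (fun i (x : ZMod (p ^ l.get i)) => (p ^ k) • x) := by
    funext y; funext i; rfl
  rw [hpi, Set.range_piMap]
  rw [Nat.card_congr (Equiv.Set.univPi _)]
  rw [Nat.card_pi]
  have hcard : ∀ i : Fin l.length,
      Nat.card (Set.range (fun x : ZMod (p ^ l.get i) => (p ^ k) • x)) = p ^ (l.get i - k) :=
    fun i => card_smul_zmod p (l.get i) k hp
  calc ∏ i : Fin l.length, Nat.card (Set.range (fun x : ZMod (p ^ l.get i) => (p ^ k) • x))
      = ∏ i : Fin l.length, p ^ (l.get i - k) := by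
        exact Finset.prod_congr rfl (fun i _ => hcard i)
    _ = p ^ (∑ i : Fin l.length, (l.get i - k)) := Finset.prod_pow_eq_pow_sum _ _ _
    _ = p ^ ((X.map (fun b => b - k)).sum) := by
        congr 1
        rw [← hl]
        have : (l.map (fun b => b - k)) = List.ofFn (fun i => l.get i - k) := by
          conv_lhs => rw [← List.ofFn_get l]
          rw [List.map_ofFn]
          rfl
        rw [show ((l : Multiset ℕ).map (fun b => b - k)) = ((l.map (fun b => b - k) : List ℕ) : Multiset ℕ) from rfl]
        rw [this]
        rw [show ((List.ofFn (fun i => l.get i - k) : List ℕ) : Multiset ℕ).sum = (List.ofFn (fun i => l.get i - k)).sum from rfl]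
        rw [List.sum_ofFn]

def smulHom (T : Type*) [AddCommGroup T] (c : ℕ) : T →+ T :=
  AddMonoidHom.mk' (fun x => c • x) (fun a b => smul_add c a b)

lemma smulHom_apply {T : Type*} [AddCommGroup T] (c : ℕ) (x : T) : smulHom T c x = c • x := rfl

lemma card_range_smulHom (T : Type*) [AddCommGroup T] (c : ℕ) :
    Nat.card ((smulHom T c).range) = Nat.card (Set.range fun x : T => c • x) := rfl

lemma card_quot_mul (T : Type*) [AddCommGroup T] [Finite T] (C : AddSubgroup T) (c : ℕ) :
    Nat.card (Set.range fun y : T ⧸ C => c • y) * Nat.card ((smulHom T c).range ⊓ C : AddSubgroup T) =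
      Nat.card (Set.range fun x : T => c • x) := by
  classical
  set π := QuotientAddGroup.mk' C with hπ
  set R := (smulHom T c).range with hR
  set f := π.comp R.subtype with hf
  have hrange : f.range = R.map π := by
    rw [hf, AddMonoidHom.range_comp, AddSubgroup.range_subtype]
  have hmap : R.map π = (smulHom (T ⧸ C) c).range := by
    ext y
    rw [AddSubgroup.mem_map]
    constructor
    · rintro ⟨x, hx, rfl⟩
      obtain ⟨x', rfl⟩ := AddMonoidHom.mem_range.1 hx
      exact ⟨x', by rw [smulHom_apply, smulHom_apply, map_nsmul]; rfl⟩
    · rintro ⟨q, rfl⟩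
      obtain ⟨x, rfl⟩ := QuotientAddGroup.mk'_surjective C q
      exact ⟨c • x, ⟨x, rfl⟩, by rw [smulHom_apply, map_nsmul]⟩
  have hker : f.ker = (R ⊓ C).addSubgroupOf R := by
    ext x
    rw [AddMonoidHom.mem_ker, AddSubgroup.mem_addSubgroupOf]
    rw [hf, AddMonoidHom.comp_apply]
    rw [show π (R.subtype x) = π ↑x from rfl]
    rw [hπ]
    rw [QuotientAddGroup.mk'_apply, QuotientAddGroup.eq_zero_iff]
    simp [AddSubgroup.mem_inf, x.2]
  have hcard := AddSubgroup.card_eq_card_quotient_mul_card_addSubgroup (α := R) f.ker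
  have h1 : Nat.card (R ⧸ f.ker) = Nat.card f.range :=
    Nat.card_congr (QuotientAddGroup.quotientKerEquivRange f).toEquiv
  have h2 : Nat.card f.ker = Nat.card (R ⊓ C : AddSubgroup T) := by
    rw [hker]
    exact Nat.card_congr (AddSubgroup.addSubgroupOfEquivOfLe inf_le_left).toEquiv
  have h3 : Nat.card f.range = Nat.card (Set.range fun y : T ⧸ C => c • y) := by
    rw [hrange, hmap]
    exact card_range_smulHom _ _
  have h4 : Nat.card R = Nat.card (Set.range fun x : T => c • x) := card_range_smulHom _ _
  rw [← h3, ← h4, hcard, h1, h2]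

lemma isAddCyclic_zmultiples {T : Type*} [AddCommGroup T] (g : T) :
    IsAddCyclic (AddSubgroup.zmultiples g) := by
  refine ⟨⟨⟨g, AddSubgroup.mem_zmultiples g⟩, fun x => ?_⟩⟩
  obtain ⟨k, hk⟩ := AddSubgroup.mem_zmultiples_iff.1 x.2
  exact ⟨k, Subtype.ext (by simpa using hk)⟩

lemma card_pker_le {T : Type*} [AddCommGroup T] [Finite T] (g : T) (p : ℕ) (hp : 0 < p) :
    Nat.card {y : (AddSubgroup.zmultiples g) // p • y = 0} ≤ p := by
  classical
  haveI : Fintype (AddSubgroup.zmultiples g) := Fintype.ofFinite _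
  haveI := isAddCyclic_zmultiples g
  have h := IsAddCyclic.card_nsmul_eq_zero_le
    (α := (AddSubgroup.zmultiples g)) (n := p) hp
  rw [Nat.card_eq_fintype_card, Fintype.card_subtype]
  convert h using 2

-- range monotonicity
lemma range_smul_antitone (T : Type*) [AddCommGroup T] (p k : ℕ) :
    (smulHom T (p ^ (k + 1))).range ≤ (smulHom T (p ^ k)).range := by
  rintro y ⟨x, rfl⟩
  refine ⟨p • x, ?_⟩
  rw [smulHom_apply, smulHom_apply, ← mul_nsmul, ← pow_succ']

lemma card_subgroup_le {T : Type*} [AddCommGroup T] [Finite T] {H K : AddSubgroup T}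
    (h : H ≤ K) : Nat.card H ≤ Nat.card K :=
  Nat.card_le_card_of_injective (fun x => (⟨x.1, h x.2⟩ : K))
    (fun a b hab => Subtype.ext (congrArg Subtype.val hab : _))

lemma r_le_mul {T : Type*} [AddCommGroup T] [Finite T] (g : T) (p k : ℕ) (hp : 0 < p) :
    Nat.card ((smulHom T (p ^ k)).range ⊓ AddSubgroup.zmultiples g : AddSubgroup T) ≤
      p * Nat.card ((smulHom T (p ^ (k + 1))).range ⊓ AddSubgroup.zmultiples g : AddSubgroup T) := by
  classical
  set C := AddSubgroup.zmultiples g with hC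
  set X := ((smulHom T (p ^ k)).range ⊓ C : AddSubgroup T) with hX
  set Y := ((smulHom T (p ^ (k + 1))).range ⊓ C : AddSubgroup T) with hY
  have hmem : ∀ x : X, p • (x : T) ∈ Y := by
    rintro ⟨x, hx⟩
    obtain ⟨hx1, hx2⟩ := AddSubgroup.mem_inf.1 hx
    obtain ⟨y, hy⟩ := hx1
    refine AddSubgroup.mem_inf.2 ⟨⟨y, ?_⟩, AddSubgroup.nsmul_mem C hx2 p⟩
    rw [smulHom_apply] at hy ⊢
    show p ^ (k + 1) • y = p • x
    rw [pow_succ, mul_nsmul, hy]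
  let φ : X →+ Y := AddMonoidHom.mk' (fun x => ⟨p • (x : T), hmem x⟩)
    (fun a b => Subtype.ext (by push_cast; rw [smul_add]))
  have hker : Nat.card φ.ker ≤ p := by
    have hinj : Function.Injective
        (fun x : φ.ker => (⟨⟨(x : X), (x : X).2.2⟩,
          by
            have hx0 : φ x = 0 := x.2
            have := congrArg Subtype.val hx0
            exact Subtype.ext (this : _)⟩ :
          {y : C // p • y = 0})) := by
      intro a b hab
      apply Subtype.ext
      apply Subtype.ext
      exact congrArg (fun z => ((z : {y : C // p • y = 0}) : C).val) hab
    exact le_trans (Nat.card_le_card_of_injective _ hinj) (card_pker_le g p hp)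
  have hcard := AddSubgroup.card_eq_card_quotient_mul_card_addSubgroup (α := X) φ.ker
  have h1 : Nat.card (X ⧸ φ.ker) = Nat.card φ.range :=
    Nat.card_congr (QuotientAddGroup.quotientKerEquivRange φ).toEquiv
  have h2 : Nat.card φ.range ≤ Nat.card Y :=
    Nat.card_le_card_of_injective _ (AddSubgroup.subtype_injective φ.range)
  calc Nat.card X = Nat.card (X ⧸ φ.ker) * Nat.card φ.ker := hcard
    _ ≤ Nat.card Y * p := Nat.mul_le_mul (h1 ▸ h2) hker
    _ = p * Nat.card Y := Nat.mul_comm _ _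

lemma fsum_succ (X : Multiset ℕ) (k : ℕ) :
    (X.map (fun b => b - k)).sum = countGE X (k + 1) + (X.map (fun b => b - (k + 1))).sum := by
  induction X using Multiset.induction with
  | empty => simp [countGE]
  | cons a X ih =>
    rw [Multiset.map_cons, Multiset.map_cons, Multiset.sum_cons, Multiset.sum_cons, countGE_cons, ih]
    split_ifs <;> omega

lemma finite_of_expMultiset {p : ℕ} (hp : p.Prime) {M : Type*} [AddCommGroup M]
    {X : Multiset ℕ} (hX : IsExpMultiset p M X) : Finite M := by
  obtain ⟨-, l, -, ⟨e⟩⟩ := hX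
  haveI : ∀ i : Fin l.length, Finite (ZMod (p ^ l.get i)) := fun i => by
    haveI : NeZero (p ^ l.get i) := ⟨pow_ne_zero _ hp.ne_zero⟩
    infer_instance
  exact Finite.of_equiv _ e.toEquiv.symm

lemma key_ineq (p : ℕ) (hp : p.Prime) (T : Type*) [AddCommGroup T] (g : T)
    (B A : Multiset ℕ) (hB : IsExpMultiset p T B)
    (hA : IsExpMultiset p (T ⧸ AddSubgroup.zmultiples g) A) :
    ∀ n, countGE A (n + 1) ≤ countGE B (n + 1) ∧
      countGE B (n + 1) ≤ countGE A (n + 1) + 1 := by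
  haveI : Finite T := finite_of_expMultiset hp hB
  set C := AddSubgroup.zmultiples g with hC
  set fB : ℕ → ℕ := fun k => ((B.map (fun b => b - k)).sum) with hfB
  set fA : ℕ → ℕ := fun k => ((A.map (fun b => b - k)).sum) with hfA
  set r : ℕ → ℕ := fun k => Nat.card ((smulHom T (p ^ k)).range ⊓ C : AddSubgroup T) with hr
  have hQM : ∀ k, p ^ (fA k) * r k = p ^ (fB k) := by
    intro k
    have h := card_quot_mul T C (p ^ k)
    rw [card_smul_range hp hB k, card_smul_range hp hA k] at h
    exact h
  have hrpos : ∀ k, 0 < r k := fun k => Nat.card_pos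
  have hfle : ∀ k, fA k ≤ fB k := by
    intro k
    have h := hQM k
    have : p ^ fA k ≤ p ^ fB k := by
      calc p ^ fA k = p ^ fA k * 1 := (mul_one _).symm
        _ ≤ p ^ fA k * r k := Nat.mul_le_mul_left _ (hrpos k)
        _ = p ^ fB k := h
    exact (Nat.pow_le_pow_iff_right hp.two_le).1 this
  set s : ℕ → ℕ := fun k => fB k - fA k with hs
  have hrs : ∀ k, r k = p ^ (s k) := by
    intro k
    have h := hQM k
    have heq : p ^ fA k * r k = p ^ fA k * p ^ s k := by
      rw [h, ← pow_add]
      congr 1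
      have := hfle k
      simp only [hs]
      omega
    exact Nat.eq_of_mul_eq_mul_left (pow_pos hp.pos _) heq
  have hs_anti : ∀ k, s (k + 1) ≤ s k := by
    intro k
    have hle : r (k + 1) ≤ r k := card_subgroup_le (inf_le_inf_right C (range_smul_antitone T p k))
    rw [hrs, hrs] at hle
    exact (Nat.pow_le_pow_iff_right hp.two_le).1 hle
  have hs_step : ∀ k, s k ≤ s (k + 1) + 1 := by
    intro k
    have hle : r k ≤ p * r (k + 1) := r_le_mul g p k hp.pos
    rw [hrs, hrs, ← pow_succ'] at hle
    exact (Nat.pow_le_pow_iff_right hp.two_le).1 hle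
  intro n
  have e1 : fB n = countGE B (n + 1) + fB (n + 1) := fsum_succ B n
  have e2 : fA n = countGE A (n + 1) + fA (n + 1) := fsum_succ A n
  have e3 : fB n = fA n + s n := by have := hfle n; simp only [hs]; omega
  have e4 : fB (n + 1) = fA (n + 1) + s (n + 1) := by have := hfle (n + 1); simp only [hs]; omega
  have := hs_anti n
  have := hs_step n
  omega


/-- Reconstruction of `(I(T), I(T/C))` from `I(T) ⊔ I(T/C)`:
for a finite abelian `p`-group `T` with exponent multiset `B` and a cyclic subgroup
`C = ℤg` with `A` the exponent multiset of `T/C`, letting `c₁ > c₂ > ⋯` be the values of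
odd multiplicity in `B ⊔ A`, the leftover part of `B = I(T)` is `{c₁, c₃, …}`, that of
`A = I(T/C)` is `{c₂, c₄, …}`, the common part satisfies
`(A ∩ B) + (A ∩ B) = (B + A) − {c₁, c₂, …}`, and `B + A` determines the ordered pair
`(B, A)`, i.e. `T ⊕ (T/C)` determines `(T, T/C)` up to isomorphism. -/
theorem reconstruction (p : ℕ) (hp : p.Prime) (T : Type*) [AddCommGroup T] (g : T)
    (B A : Multiset ℕ) (hB : IsExpMultiset p T B)
    (hA : IsExpMultiset p (T ⧸ AddSubgroup.zmultiples g) A) :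
    (B - A =
      ↑(List.ofFn fun i : Fin (((oddList (B + A)).length + 1) / 2) =>
        (oddList (B + A)).getD (2 * (i : ℕ)) 0)) ∧
    (A - B =
      ↑(List.ofFn fun i : Fin ((oddList (B + A)).length / 2) =>
        (oddList (B + A)).getD (2 * (i : ℕ) + 1) 0)) ∧
    (A ∩ B) + (A ∩ B) = (B + A) - ↑(oddList (B + A)) ∧
    B = (A ∩ B) + (B - A) ∧ A = (A ∩ B) + (A - B) ∧
    (∀ (T' : Type*) [AddCommGroup T'] (g' : T') (B' A' : Multiset ℕ),
      IsExpMultiset p T' B' →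
      IsExpMultiset p (T' ⧸ AddSubgroup.zmultiples g') A' →
      B + A = B' + A' → B = B' ∧ A = A') := by
  have key := key_ineq p hp T g B A hB hA
  refine ⟨goal1 key hB.1 hA.1, goal2 key hB.1 hA.1, goal3 key hB.1 hA.1, goal4, goal5, ?_⟩
  intro T' _ g' B' A' hB' hA' hSS
  exact unique key (key_ineq p hp T' g' B' A' hB' hA') hB.1 hB'.1 hSS
end
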